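/- arXiv:1407.2767 — 2 statements merged into one kernel-verified Lean document; each statement's English description precedes it below -/
import Mathlib

section
/- Let ρ be an elliptic N-function. Then (ρ_a)*(t) ∼ (ρ*)_{ρ'(a)}(t) uniformly in a, t ≥ 0, i.e. the conjugate of the shifted N-function is comparable to the conjugate shifted by ρ'(a), with constants depending only on the characteristics of ρ. -/
open Set Filter

/-- An N-function: strictly increasing and convex on `[0,∞)`, vanishing at `0`,
with `ρ(t)/t → 0` as `t → 0⁺` and `t/ρ(t) → 0` as `t → ∞`. -/
def IsNFunction (ρ : ℝ → ℝ) : Prop :=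
  ρ 0 = 0 ∧ StrictMonoOn ρ (Ici 0) ∧ ConvexOn ℝ (Ici 0) ρ ∧
    Tendsto (fun t => ρ t / t) (nhdsWithin 0 (Ioi 0)) (nhds 0) ∧
    Tendsto (fun t => t / ρ t) atTop (nhds 0)

/-- The conjugate (Young/Legendre) function `ρ*(t) = sup_{s ≥ 0} (s t − ρ s)`. -/
noncomputable def conjN (ρ : ℝ → ℝ) (t : ℝ) : ℝ :=
  sSup {y | ∃ s ≥ 0, y = s * t - ρ s}

/-- The shifted N-function `ρ_a(t) = ∫₀ᵗ ρ'(a+τ)/(a+τ) · τ dτ`. -/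
noncomputable def shiftN (ρ : ℝ → ℝ) (a : ℝ) (t : ℝ) : ℝ :=
  ∫ τ in (0:ℝ)..t, deriv ρ (a + τ) / (a + τ) * τ

/-- An elliptic N-function with characteristics `c₁, c₂`: `C¹` on `[0,∞)`,
`C²` on `(0,∞)`, and `ρ'(t) ∼ t ρ''(t)` uniformly in `t > 0`. -/
def IsElliptic (ρ : ℝ → ℝ) (c₁ c₂ : ℝ) : Prop :=
  ContDiffOn ℝ 1 ρ (Ici 0) ∧ ContDiffOn ℝ 2 ρ (Ioi 0) ∧
    ∀ t > 0, c₁ * deriv ρ t ≤ t * deriv (deriv ρ) t ∧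
      t * deriv (deriv ρ) t ≤ c₂ * deriv ρ t

section Aux
variable {ρ : ℝ → ℝ} {c₁ c₂ : ℝ}

lemma rho_nonneg (hN : IsNFunction ρ) {x : ℝ} (hx : 0 ≤ x) : 0 ≤ ρ x := by
  rcases eq_or_lt_of_le hx with h | h
  · simp [← h, hN.1]
  · have := hN.2.1 (self_mem_Ici) (le_of_lt h) h
    simpa [hN.1] using this.le

lemma rho_pos (hN : IsNFunction ρ) {x : ℝ} (hx : 0 < x) : 0 < ρ x := by
  have := hN.2.1 (self_mem_Ici) (le_of_lt hx) hx
  simpa [hN.1] using this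

lemma rho_contOn (hE : IsElliptic ρ c₁ c₂) : ContinuousOn ρ (Ici 0) :=
  hE.1.continuousOn

lemma hasD (hE : IsElliptic ρ c₁ c₂) {x : ℝ} (hx : 0 < x) :
    HasDerivAt ρ (deriv ρ x) x := by
  have h := hE.2.1.differentiableOn (by norm_num) x hx
  exact (h.differentiableAt (isOpen_Ioi.mem_nhds hx)).hasDerivAt

lemma d2smooth (hE : IsElliptic ρ c₁ c₂) : ContDiffOn ℝ 1 (deriv ρ) (Ioi 0) := by
  have h : ContDiffOn ℝ (1 + 1) ρ (Ioi 0) := by exact_mod_cast hE.2.1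
  exact ((contDiffOn_succ_iff_deriv_of_isOpen isOpen_Ioi).1 h).2.2

lemma hasD2 (hE : IsElliptic ρ c₁ c₂) {x : ℝ} (hx : 0 < x) :
    HasDerivAt (deriv ρ) (deriv (deriv ρ) x) x := by
  have h := (d2smooth hE).differentiableOn one_ne_zero x hx
  exact (h.differentiableAt (isOpen_Ioi.mem_nhds hx)).hasDerivAt

lemma dcont_pos (hE : IsElliptic ρ c₁ c₂) : ContinuousOn (deriv ρ) (Ioi 0) :=
  (d2smooth hE).continuousOn

lemma dnonneg (hN : IsNFunction ρ) (hE : IsElliptic ρ c₁ c₂) {x : ℝ} (hx : 0 < x) :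
    0 ≤ deriv ρ x := by
  have h := (hasD hE hx)
  rw [hasDerivAt_iff_tendsto_slope] at h
  have h2 : Tendsto (slope ρ x) (nhdsWithin x (Ioi x)) (nhds (deriv ρ x)) :=
    h.mono_left (nhdsWithin_mono _ (fun y hy => ne_of_gt hy))
  refine ge_of_tendsto h2 ?_
  filter_upwards [self_mem_nhdsWithin] with y hy
  have hxy : x < y := hy
  have := hN.2.1 (le_of_lt hx) (le_of_lt (hx.trans hxy)) hxy
  rw [slope_def_field]
  exact div_nonneg (by linarith) (by linarith)

lemma d2nonneg (hN : IsNFunction ρ) (hc₁ : 0 < c₁) (hE : IsElliptic ρ c₁ c₂)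
    {x : ℝ} (hx : 0 < x) : 0 ≤ deriv (deriv ρ) x := by
  have h := (hE.2.2 x hx).1
  have h2 := dnonneg hN hE hx
  nlinarith [mul_nonneg hc₁.le h2]

lemma dmono_Ioi (hN : IsNFunction ρ) (hc₁ : 0 < c₁) (hE : IsElliptic ρ c₁ c₂) :
    MonotoneOn (deriv ρ) (Ioi 0) := by
  refine monotoneOn_of_deriv_nonneg (convex_Ioi 0) (dcont_pos hE) ?_ ?_
  · intro x hx
    rw [interior_Ioi] at hx
    exact ((d2smooth hE).differentiableOn one_ne_zero x hx).differentiableAt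
      (isOpen_Ioi.mem_nhds hx) |>.differentiableWithinAt
  · intro x hx
    rw [interior_Ioi] at hx
    exact d2nonneg hN hc₁ hE hx

lemma dpos (hN : IsNFunction ρ) (hc₁ : 0 < c₁) (hE : IsElliptic ρ c₁ c₂)
    {x : ℝ} (hx : 0 < x) : 0 < deriv ρ x := by
  have hlt : x / 2 < x := by linarith
  obtain ⟨ζ, hζ, hζ2⟩ := exists_hasDerivAt_eq_slope ρ (deriv ρ) hlt
    ((rho_contOn hE).mono (fun y hy => by
      simp only [mem_Icc] at hy; exact le_trans (by positivity) hy.1))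
    (fun y hy => hasD hE (lt_trans (by positivity) hy.1))
  have hs : 0 < (ρ x - ρ (x/2)) / (x - x/2) := by
    have := hN.2.1 (by positivity : (0:ℝ) ≤ x/2) hx.le hlt
    apply div_pos <;> linarith
  have : deriv ρ ζ ≤ deriv ρ x :=
    dmono_Ioi hN hc₁ hE (lt_trans (by positivity) hζ.1) hx (le_of_lt hζ.2)
  · linarith [hζ2 ▸ hs]

lemma ftc_pos (hN : IsNFunction ρ) (hc₁ : 0 < c₁) (hE : IsElliptic ρ c₁ c₂)
    {x y : ℝ} (hx : 0 < x) (hxy : x ≤ y) :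
    ∫ τ in x..y, deriv ρ τ = ρ y - ρ x := by
  refine intervalIntegral.integral_eq_sub_of_hasDeriv_right_of_le hxy
    ((rho_contOn hE).mono (fun z hz => le_trans hx.le hz.1)) ?_ ?_
  · intro z hz
    exact (hasD hE (lt_trans hx hz.1)).hasDerivWithinAt
  · apply MonotoneOn.intervalIntegrable
    intro u hu v hv huv
    rw [uIcc_of_le hxy] at hu hv
    exact dmono_Ioi hN hc₁ hE (lt_of_lt_of_le hx hu.1) (lt_of_lt_of_le hx hv.1) huv

lemma d_le_slope (hN : IsNFunction ρ) (hc₁ : 0 < c₁) (hE : IsElliptic ρ c₁ c₂)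
    {t : ℝ} (ht : 0 < t) : deriv ρ t ≤ 2 * (ρ (2*t) / (2*t)) := by
  have h2t : t < 2*t := by linarith
  have hint : (∫ τ in t..(2*t), deriv ρ τ) = ρ (2*t) - ρ t := ftc_pos hN hc₁ hE ht h2t.le
  have hlow : t * deriv ρ t ≤ ∫ τ in t..(2*t), deriv ρ τ := by
    have : (∫ _ in t..(2*t), deriv ρ t) ≤ ∫ τ in t..(2*t), deriv ρ τ := by
      apply intervalIntegral.integral_mono_on h2t.le intervalIntegrable_const
      · apply MonotoneOn.intervalIntegrable
        intro u hu v hv huv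
        rw [uIcc_of_le h2t.le] at hu hv
        exact dmono_Ioi hN hc₁ hE (lt_of_lt_of_le ht hu.1) (lt_of_lt_of_le ht hv.1) huv
      · intro x hx
        exact dmono_Ioi hN hc₁ hE ht (lt_of_lt_of_le ht hx.1) hx.1
    have e : (2*t - t) * deriv ρ t = t * deriv ρ t := by ring
    simpa [e] using this
  have h0 : 0 ≤ ρ t := rho_nonneg hN ht.le
  rw [hint] at hlow
  rw [mul_div_assoc', le_div_iff₀ (by linarith : (0:ℝ) < 2*t)]
  nlinarith [hlow]

lemma tendsto_d_zero (hN : IsNFunction ρ) (hc₁ : 0 < c₁) (hE : IsElliptic ρ c₁ c₂) :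
    Tendsto (deriv ρ) (nhdsWithin 0 (Ioi 0)) (nhds 0) := by
  have hup : Tendsto (fun t => 2 * (ρ (2*t) / (2*t))) (nhdsWithin 0 (Ioi 0)) (nhds 0) := by
    have hmap : Tendsto (fun t : ℝ => 2*t) (nhdsWithin 0 (Ioi 0)) (nhdsWithin 0 (Ioi 0)) := by
      apply tendsto_nhdsWithin_of_tendsto_nhds_of_eventually_within
      · have : Tendsto (fun t : ℝ => 2*t) (nhds 0) (nhds (2*0)) :=
          (continuous_const.mul continuous_id).tendsto 0
        simpa using this.mono_left nhdsWithin_le_nhds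
      · filter_upwards [self_mem_nhdsWithin] with t ht
        exact mul_pos two_pos (show (0:ℝ) < t from ht)
    have := (hN.2.2.2.1.comp hmap).const_mul (2:ℝ)
    simpa using this
  refine tendsto_of_tendsto_of_tendsto_of_le_of_le' tendsto_const_nhds hup ?_ ?_
  · filter_upwards [self_mem_nhdsWithin] with t ht
    exact dnonneg hN hE ht
  · filter_upwards [self_mem_nhdsWithin] with t ht
    exact d_le_slope hN hc₁ hE ht

lemma d0 (hN : IsNFunction ρ) : deriv ρ 0 = 0 := by
  by_cases hd : DifferentiableAt ℝ ρ 0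
  · have h := hd.hasDerivAt
    rw [hasDerivAt_iff_tendsto_slope] at h
    have h2 : Tendsto (slope ρ 0) (nhdsWithin 0 (Ioi 0)) (nhds (deriv ρ 0)) :=
      h.mono_left (nhdsWithin_mono _ (fun y hy => ne_of_gt hy))
    have h3 : Tendsto (slope ρ 0) (nhdsWithin 0 (Ioi 0)) (nhds 0) := by
      apply hN.2.2.2.1.congr'
      filter_upwards [self_mem_nhdsWithin] with t _
      rw [slope_def_field, hN.1]
      ring_nf
    exact tendsto_nhds_unique h2 h3
  · exact deriv_zero_of_not_differentiableAt hd

lemma dcont (hN : IsNFunction ρ) (hc₁ : 0 < c₁) (hE : IsElliptic ρ c₁ c₂) :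
    ContinuousOn (deriv ρ) (Ici 0) := by
  intro x hx
  rcases eq_or_lt_of_le (show (0:ℝ) ≤ x from hx) with h | h
  · rw [← h]
    rw [← continuousWithinAt_Ioi_iff_Ici]
    rw [ContinuousWithinAt, d0 hN]
    exact tendsto_d_zero hN hc₁ hE
  · exact ((dcont_pos hE x h).continuousAt (isOpen_Ioi.mem_nhds h)).continuousWithinAt

lemma dmono (hN : IsNFunction ρ) (hc₁ : 0 < c₁) (hE : IsElliptic ρ c₁ c₂) :
    MonotoneOn (deriv ρ) (Ici 0) := by
  refine monotoneOn_of_deriv_nonneg (convex_Ici 0) (dcont hN hc₁ hE) ?_ ?_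
  · intro x hx
    rw [interior_Ici] at hx
    exact ((d2smooth hE).differentiableOn one_ne_zero x hx).differentiableAt
      (isOpen_Ioi.mem_nhds hx) |>.differentiableWithinAt
  · intro x hx
    rw [interior_Ici] at hx
    exact d2nonneg hN hc₁ hE hx

lemma dstrict (hN : IsNFunction ρ) (hc₁ : 0 < c₁) (hE : IsElliptic ρ c₁ c₂) :
    StrictMonoOn (deriv ρ) (Ici 0) := by
  refine strictMonoOn_of_deriv_pos (convex_Ici 0) (dcont hN hc₁ hE) ?_
  intro x hx
  rw [interior_Ici] at hx
  have h := (hE.2.2 x hx).1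
  have h2 := dpos hN hc₁ hE hx
  have : 0 < c₁ * deriv ρ x := mul_pos hc₁ h2
  have h3 : 0 < x * deriv (deriv ρ) x := lt_of_lt_of_le this h
  rcases lt_or_ge 0 (deriv (deriv ρ) x) with hgt | hle
  · exact hgt
  · exfalso
    have hx' : (0:ℝ) < x := hx
    nlinarith [mul_nonneg hx'.le (neg_nonneg.2 hle)]

lemma rho_div_top (hN : IsNFunction ρ) : Tendsto (fun x => ρ x / x) atTop atTop := by
  have h : Tendsto (fun x => x / ρ x) atTop (nhdsWithin 0 (Ioi 0)) := by
    apply tendsto_nhdsWithin_of_tendsto_nhds_of_eventually_within _ hN.2.2.2.2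
    filter_upwards [eventually_ge_atTop (1:ℝ)] with x hx
    exact div_pos (by linarith) (rho_pos hN (by linarith))
  have := h.inv_tendsto_nhdsGT_zero
  apply this.congr'
  filter_upwards [eventually_ge_atTop (1:ℝ)] with x hx
  simp [Pi.inv_apply, inv_div]

lemma dtop (hN : IsNFunction ρ) (hc₁ : 0 < c₁) (hE : IsElliptic ρ c₁ c₂) :
    Tendsto (deriv ρ) atTop atTop := by
  have key : ∀ x : ℝ, 2 ≤ x → ρ x / x - ρ 1 ≤ deriv ρ x := by
    intro x hx
    have h1x : (1:ℝ) < x := by linarith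
    obtain ⟨ζ, hζ, hζ2⟩ := exists_hasDerivAt_eq_slope ρ (deriv ρ) h1x
      ((rho_contOn hE).mono (fun y hy => le_trans zero_le_one hy.1))
      (fun y hy => hasD hE (lt_trans zero_lt_one hy.1))
    have hmono : deriv ρ ζ ≤ deriv ρ x :=
      dmono_Ioi hN hc₁ hE (lt_trans zero_lt_one hζ.1) (show (0:ℝ) < x by linarith) (le_of_lt hζ.2)
    rw [hζ2] at hmono
    have hρ1 : 0 ≤ ρ 1 := rho_nonneg hN zero_le_one
    have hρx : 0 ≤ ρ x := rho_nonneg hN (by linarith)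
    have hs : ρ x / x - ρ 1 ≤ (ρ x - ρ 1) / (x - 1) := by
      rw [div_sub' (by linarith : x ≠ 0), div_le_div_iff₀ (by linarith) (by linarith)]
      nlinarith [mul_nonneg hρ1 (mul_nonneg (by linarith : (0:ℝ) ≤ x) (by linarith : (0:ℝ) ≤ x - 2))]
    linarith
  apply tendsto_atTop_mono' _ _ (tendsto_atTop_add_const_right _ (-(ρ 1)) (rho_div_top hN))
  filter_upwards [eventually_ge_atTop (2:ℝ)] with x hx
  simpa [sub_eq_add_neg] using key x hx

lemma ftc (hN : IsNFunction ρ) (hc₁ : 0 < c₁) (hE : IsElliptic ρ c₁ c₂)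
    {x y : ℝ} (hx : 0 ≤ x) (hxy : x ≤ y) :
    ∫ τ in x..y, deriv ρ τ = ρ y - ρ x := by
  refine intervalIntegral.integral_eq_sub_of_hasDeriv_right_of_le hxy
    ((rho_contOn hE).mono (fun z hz => le_trans hx hz.1)) ?_ ?_
  · intro z hz
    exact (hasD hE (lt_of_le_of_lt hx hz.1)).hasDerivWithinAt
  · apply MonotoneOn.intervalIntegrable
    intro u hu v hv huv
    rw [uIcc_of_le hxy] at hu hv
    exact dmono hN hc₁ hE (le_trans hx hu.1) (le_trans hx hv.1) huv

end Aux

noncomputable def Phi (ρ : ℝ → ℝ) : ℝ → ℝ := fun s => if 0 ≤ s then deriv ρ s else s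

section Aux2
variable {ρ : ℝ → ℝ} {c₁ c₂ : ℝ}

lemma Phi_nonneg_eq {s : ℝ} (hs : 0 ≤ s) : Phi ρ s = deriv ρ s := if_pos hs

lemma Phi_strictMono (hN : IsNFunction ρ) (hc₁ : 0 < c₁) (hE : IsElliptic ρ c₁ c₂) :
    StrictMono (Phi ρ) := by
  intro s t hst
  unfold Phi
  rcases le_or_gt 0 s with hs | hs
  · rw [if_pos hs, if_pos (le_trans hs hst.le)]
    exact dstrict hN hc₁ hE hs (le_trans hs hst.le) hst
  · rw [if_neg (not_le.2 hs)]
    rcases le_or_gt 0 t with ht | ht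
    · rw [if_pos ht]
      rcases eq_or_lt_of_le ht with h | h
      · rw [← h, d0 hN]; exact hs
      · exact lt_of_lt_of_le hs (dnonneg hN hE h)
    · rw [if_neg (not_le.2 ht)]; exact hst

lemma Phi_surj (hN : IsNFunction ρ) (hc₁ : 0 < c₁) (hE : IsElliptic ρ c₁ c₂) :
    Function.Surjective (Phi ρ) := by
  intro y
  rcases le_or_gt 0 y with hy | hy
  · obtain ⟨M, hM⟩ := (((dtop hN hc₁ hE).eventually_ge_atTop y).and (eventually_ge_atTop 0)).exists
    have hIcc : y ∈ Icc (deriv ρ 0) (deriv ρ M) := by rw [d0 hN]; exact ⟨hy, hM.1⟩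
    obtain ⟨x, hx, hxy⟩ := intermediate_value_Icc hM.2
      ((dcont hN hc₁ hE).mono Icc_subset_Ici_self) hIcc
    exact ⟨x, by rw [Phi_nonneg_eq hx.1]; exact hxy⟩
  · exact ⟨y, if_neg (not_le.2 hy)⟩

end Aux2

noncomputable def invD (ρ : ℝ → ℝ) : ℝ → ℝ := Function.invFun (Phi ρ)

section Aux3
variable {ρ : ℝ → ℝ} {c₁ c₂ : ℝ}

lemma invD_left (hN : IsNFunction ρ) (hc₁ : 0 < c₁) (hE : IsElliptic ρ c₁ c₂) :
    Function.LeftInverse (invD ρ) (Phi ρ) :=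
  Function.leftInverse_invFun (Phi_strictMono hN hc₁ hE).injective

lemma invD_right (hN : IsNFunction ρ) (hc₁ : 0 < c₁) (hE : IsElliptic ρ c₁ c₂) :
    Function.RightInverse (invD ρ) (Phi ρ) :=
  Function.rightInverse_invFun (Phi_surj hN hc₁ hE)

lemma invD_eq_orderIso (hN : IsNFunction ρ) (hc₁ : 0 < c₁) (hE : IsElliptic ρ c₁ c₂) :
    invD ρ = ⇑((Phi_strictMono hN hc₁ hE).orderIsoOfSurjective (Phi ρ)
      (Phi_surj hN hc₁ hE)).symm := by
  funext u
  apply (Phi_strictMono hN hc₁ hE).injective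
  rw [invD_right hN hc₁ hE u]
  exact (StrictMono.orderIsoOfSurjective_self_symm_apply (Phi ρ)
    (Phi_strictMono hN hc₁ hE) (Phi_surj hN hc₁ hE) u).symm

lemma invD_cont (hN : IsNFunction ρ) (hc₁ : 0 < c₁) (hE : IsElliptic ρ c₁ c₂) :
    Continuous (invD ρ) := by
  rw [invD_eq_orderIso hN hc₁ hE]
  exact OrderIso.continuous _

lemma invD_strictMono (hN : IsNFunction ρ) (hc₁ : 0 < c₁) (hE : IsElliptic ρ c₁ c₂) :
    StrictMono (invD ρ) := by
  rw [invD_eq_orderIso hN hc₁ hE]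
  exact (OrderIso.strictMono _)

lemma invD_zero (hN : IsNFunction ρ) (hc₁ : 0 < c₁) (hE : IsElliptic ρ c₁ c₂) :
    invD ρ 0 = 0 := by
  have h : Phi ρ 0 = 0 := by rw [Phi_nonneg_eq le_rfl, d0 hN]
  nth_rewrite 1 [← h]
  rw [invD_left hN hc₁ hE 0]

lemma invD_nonneg (hN : IsNFunction ρ) (hc₁ : 0 < c₁) (hE : IsElliptic ρ c₁ c₂)
    {u : ℝ} (hu : 0 ≤ u) : 0 ≤ invD ρ u := by
  rw [← invD_zero hN hc₁ hE]
  exact (invD_strictMono hN hc₁ hE).monotone hu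

lemma invD_pos (hN : IsNFunction ρ) (hc₁ : 0 < c₁) (hE : IsElliptic ρ c₁ c₂)
    {u : ℝ} (hu : 0 < u) : 0 < invD ρ u := by
  rw [← invD_zero hN hc₁ hE]
  exact (invD_strictMono hN hc₁ hE) hu

lemma deriv_invD (hN : IsNFunction ρ) (hc₁ : 0 < c₁) (hE : IsElliptic ρ c₁ c₂)
    {u : ℝ} (hu : 0 ≤ u) : deriv ρ (invD ρ u) = u := by
  rw [← Phi_nonneg_eq (invD_nonneg hN hc₁ hE hu)]
  exact invD_right hN hc₁ hE u

lemma invD_deriv (hN : IsNFunction ρ) (hc₁ : 0 < c₁) (hE : IsElliptic ρ c₁ c₂)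
    {s : ℝ} (hs : 0 ≤ s) : invD ρ (deriv ρ s) = s := by
  rw [← Phi_nonneg_eq hs]
  exact invD_left hN hc₁ hE s

end Aux3

section Aux4
variable {ρ : ℝ → ℝ} {c₁ c₂ : ℝ}

lemma dbl_low (hN : IsNFunction ρ) (hc₁ : 0 < c₁) (hE : IsElliptic ρ c₁ c₂)
    {x y : ℝ} (hx : 0 < x) (hxy : x ≤ y) :
    deriv ρ x * (y/x) ^ c₁ ≤ deriv ρ y := by
  have hy : 0 < y := lt_of_lt_of_le hx hxy
  have hmono : MonotoneOn (fun z : ℝ => deriv ρ z * z ^ (-c₁)) (Ioi 0) := by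
    refine monotoneOn_of_deriv_nonneg (convex_Ioi 0) ?_ ?_ ?_
    · exact (dcont_pos hE).mul (continuousOn_id.rpow_const
        (fun z hz => Or.inl (ne_of_gt hz)))
    · intro z hz
      rw [interior_Ioi] at hz
      exact (((hasD2 hE hz).mul
        (Real.hasDerivAt_rpow_const (Or.inl (ne_of_gt hz)))).differentiableAt).differentiableWithinAt
    · intro z hz
      rw [interior_Ioi] at hz
      have hd : HasDerivAt (fun w : ℝ => deriv ρ w * w ^ (-c₁))
          (deriv (deriv ρ) z * z ^ (-c₁) + deriv ρ z * (-c₁ * z ^ (-c₁ - 1))) z :=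
        (hasD2 hE hz).mul (Real.hasDerivAt_rpow_const (Or.inl (ne_of_gt hz)))
      rw [hd.deriv]
      have h1 := (hE.2.2 z hz).1
      have hz1 : (0:ℝ) < z ^ (-c₁ - 1) := Real.rpow_pos_of_pos hz _
      have hid : z ^ (-c₁) = z ^ (-c₁ - 1) * z := by
        have he : -c₁ = (-c₁ - 1) + 1 := by ring
        rw [he, Real.rpow_add_one (ne_of_gt hz)]
        norm_num
      rw [hid]
      nlinarith [mul_nonneg hz1.le (sub_nonneg.2 h1)]
  have hm := hmono (show x ∈ Ioi 0 from hx) (show y ∈ Ioi 0 from hy) hxy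
  dsimp only at hm
  have hxp : 0 < x ^ c₁ := Real.rpow_pos_of_pos hx _
  have hyp : 0 < y ^ c₁ := Real.rpow_pos_of_pos hy _
  rw [Real.rpow_neg hx.le, Real.rpow_neg hy.le, ← div_eq_mul_inv, ← div_eq_mul_inv] at hm
  rw [Real.div_rpow hy.le hx.le, mul_div_assoc', div_le_iff₀ hxp]
  exact (div_le_div_iff₀ hxp hyp).1 hm

lemma dbl_up (hN : IsNFunction ρ) (hc₂ : 0 < c₂) (hE : IsElliptic ρ c₁ c₂)
    {x y : ℝ} (hx : 0 < x) (hxy : x ≤ y) :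
    deriv ρ y ≤ deriv ρ x * (y/x) ^ c₂ := by
  have hy : 0 < y := lt_of_lt_of_le hx hxy
  have hmono : AntitoneOn (fun z : ℝ => deriv ρ z * z ^ (-c₂)) (Ioi 0) := by
    refine antitoneOn_of_deriv_nonpos (convex_Ioi 0) ?_ ?_ ?_
    · exact (dcont_pos hE).mul (continuousOn_id.rpow_const
        (fun z hz => Or.inl (ne_of_gt hz)))
    · intro z hz
      rw [interior_Ioi] at hz
      exact (((hasD2 hE hz).mul
        (Real.hasDerivAt_rpow_const (Or.inl (ne_of_gt hz)))).differentiableAt).differentiableWithinAt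
    · intro z hz
      rw [interior_Ioi] at hz
      have hd : HasDerivAt (fun w : ℝ => deriv ρ w * w ^ (-c₂))
          (deriv (deriv ρ) z * z ^ (-c₂) + deriv ρ z * (-c₂ * z ^ (-c₂ - 1))) z :=
        (hasD2 hE hz).mul (Real.hasDerivAt_rpow_const (Or.inl (ne_of_gt hz)))
      rw [hd.deriv]
      have h1 := (hE.2.2 z hz).2
      have hz1 : (0:ℝ) < z ^ (-c₂ - 1) := Real.rpow_pos_of_pos hz _
      have hid : z ^ (-c₂) = z ^ (-c₂ - 1) * z := by
        have he : -c₂ = (-c₂ - 1) + 1 := by ring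
        rw [he, Real.rpow_add_one (ne_of_gt hz)]
        norm_num
      rw [hid]
      nlinarith [mul_nonneg hz1.le (sub_nonneg.2 h1)]
  have hm := hmono (show x ∈ Ioi 0 from hx) (show y ∈ Ioi 0 from hy) hxy
  dsimp only at hm
  have hxp : 0 < x ^ c₂ := Real.rpow_pos_of_pos hx _
  have hyp : 0 < y ^ c₂ := Real.rpow_pos_of_pos hy _
  rw [Real.rpow_neg hx.le, Real.rpow_neg hy.le, ← div_eq_mul_inv, ← div_eq_mul_inv] at hm
  rw [Real.div_rpow hy.le hx.le, mul_div_assoc', le_div_iff₀ hxp]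
  exact (div_le_div_iff₀ hyp hxp).1 hm

end Aux4

section Aux5
variable {ρ : ℝ → ℝ} {c₁ c₂ : ℝ}

lemma invD_dbl (hN : IsNFunction ρ) (hc₁ : 0 < c₁) (hE : IsElliptic ρ c₁ c₂)
    {w κ : ℝ} (hw : 0 ≤ w) (hκ : 1 ≤ κ) :
    invD ρ (κ * w) ≤ κ ^ (1/c₁) * invD ρ w := by
  rcases eq_or_lt_of_le hw with h | h
  · simp [← h, invD_zero hN hc₁ hE]
  · set x := invD ρ w with hxdef
    have hxpos : 0 < x := invD_pos hN hc₁ hE h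
    have hder : deriv ρ x = w := deriv_invD hN hc₁ hE hw
    set lam := κ ^ (1/c₁) with hlamdef
    have hκ0 : (0:ℝ) < κ := lt_of_lt_of_le zero_lt_one hκ
    have hlam : 1 ≤ lam := Real.one_le_rpow hκ (by positivity)
    have hxle : x ≤ lam * x := le_mul_of_one_le_left hxpos.le hlam
    have hkey : κ * w ≤ deriv ρ (lam * x) := by
      have hd := dbl_low hN hc₁ hE hxpos hxle
      have hrat : (lam * x) / x = lam := by field_simp
      rw [hrat, hder] at hd
      have hlc : lam ^ c₁ = κ := by
        rw [hlamdef, ← Real.rpow_mul hκ0.le, one_div,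
          inv_mul_cancel₀ (ne_of_gt hc₁), Real.rpow_one]
      rw [hlc] at hd
      linarith [hd]
    have := (invD_strictMono hN hc₁ hE).monotone hkey
    rwa [invD_deriv hN hc₁ hE (by positivity : (0:ℝ) ≤ lam * x)] at this

end Aux5

noncomputable def qf (ρ : ℝ → ℝ) (a : ℝ) : ℝ → ℝ :=
  fun τ => deriv ρ (a + τ) / (a + τ) * τ

section Aux6
variable {ρ : ℝ → ℝ} {c₁ c₂ : ℝ} {a : ℝ}

lemma qf_zero : qf ρ a 0 = 0 := by simp [qf]

lemma qf_eq {τ : ℝ} (hτ : 0 < a + τ) :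
    qf ρ a τ = deriv ρ (a + τ) * (τ / (a + τ)) := by
  unfold qf; ring

lemma qf_nonneg (hN : IsNFunction ρ) (hE : IsElliptic ρ c₁ c₂) (ha : 0 ≤ a)
    {τ : ℝ} (hτ : 0 ≤ τ) : 0 ≤ qf ρ a τ := by
  rcases eq_or_lt_of_le (by positivity : (0:ℝ) ≤ a + τ) with h | h
  · unfold qf; rw [← h]; simp
  · rw [qf_eq h]
    rcases eq_or_lt_of_le hτ with h2 | h2
    · simp [← h2]
    · have h3 : 0 ≤ deriv ρ (a + τ) := dnonneg hN hE h
      positivity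

lemma qf_mono (hN : IsNFunction ρ) (hc₁ : 0 < c₁) (hE : IsElliptic ρ c₁ c₂) (ha : 0 ≤ a) :
    MonotoneOn (qf ρ a) (Ici 0) := by
  intro x hx y hy hxy
  have hx0 : (0:ℝ) ≤ x := hx
  have hy0 : (0:ℝ) ≤ y := hy
  rcases eq_or_lt_of_le hx0 with h | h
  · rw [← h, qf_zero]
    exact qf_nonneg hN hE ha hy0
  · have hax : 0 < a + x := by linarith
    have hay : 0 < a + y := by linarith
    rw [qf_eq hax, qf_eq hay]
    have h1 : deriv ρ (a + x) ≤ deriv ρ (a + y) :=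
      dmono hN hc₁ hE (show (0:ℝ) ≤ a + x by linarith) (show (0:ℝ) ≤ a + y by linarith) (by linarith)
    have h2 : x / (a + x) ≤ y / (a + y) := by
      rw [div_le_div_iff₀ hax hay]
      nlinarith
    have h3 : 0 ≤ deriv ρ (a + x) := dnonneg hN hE hax
    have h4 : 0 ≤ x / (a + x) := by positivity
    exact mul_le_mul h1 h2 h4 (le_trans h3 h1)

lemma qf_cont (hN : IsNFunction ρ) (hc₁ : 0 < c₁) (hE : IsElliptic ρ c₁ c₂) (ha : 0 ≤ a) :
    ContinuousOn (qf ρ a) (Ici 0) := by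
  rcases eq_or_lt_of_le ha with h | h
  · subst h
    have heq : EqOn (qf ρ 0) (deriv ρ) (Ici 0) := by
      intro τ hτ
      rcases eq_or_lt_of_le (show (0:ℝ) ≤ τ from hτ) with h2 | h2
      · rw [← h2, qf_zero, d0 hN]
      · unfold qf
        rw [zero_add, div_mul_cancel₀ _ (ne_of_gt h2)]
    exact (dcont hN hc₁ hE).congr heq
  · apply ContinuousOn.mul _ continuousOn_id
    apply ContinuousOn.div
    · apply (dcont hN hc₁ hE).comp (by fun_prop)
      intro τ hτ
      have hτ' : (0:ℝ) ≤ τ := hτ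
      simp only [mem_Ici]
      linarith
    · fun_prop
    · intro τ hτ
      have hτ' : (0:ℝ) ≤ τ := hτ
      exact ne_of_gt (by linarith : (0:ℝ) < a + τ)

lemma qf_intble (hN : IsNFunction ρ) (hc₁ : 0 < c₁) (hE : IsElliptic ρ c₁ c₂) (ha : 0 ≤ a)
    {x y : ℝ} (hx : 0 ≤ x) (hxy : x ≤ y) :
    IntervalIntegrable (qf ρ a) MeasureTheory.volume x y := by
  apply MonotoneOn.intervalIntegrable
  intro u hu v hv huv
  rw [uIcc_of_le hxy] at hu hv
  exact qf_mono hN hc₁ hE ha (le_trans hx hu.1) (le_trans hx hv.1) huv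

lemma shiftN_eq (s : ℝ) : shiftN ρ a s = ∫ τ in (0:ℝ)..s, qf ρ a τ := rfl

lemma shiftN_diff (hN : IsNFunction ρ) (hc₁ : 0 < c₁) (hE : IsElliptic ρ c₁ c₂) (ha : 0 ≤ a)
    {x y : ℝ} (hx : 0 ≤ x) (hxy : x ≤ y) :
    shiftN ρ a y - shiftN ρ a x = ∫ τ in x..y, qf ρ a τ := by
  rw [shiftN_eq, shiftN_eq]
  rw [← intervalIntegral.integral_add_adjacent_intervals
    (qf_intble hN hc₁ hE ha le_rfl hx) (qf_intble hN hc₁ hE ha hx hxy)]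
  ring

lemma int_qf_lower (hN : IsNFunction ρ) (hc₁ : 0 < c₁) (hE : IsElliptic ρ c₁ c₂) (ha : 0 ≤ a)
    {x y : ℝ} (hx : 0 ≤ x) (hxy : x ≤ y) :
    (y - x) * qf ρ a x ≤ ∫ τ in x..y, qf ρ a τ := by
  have h : (∫ _ in x..y, qf ρ a x) ≤ ∫ τ in x..y, qf ρ a τ := by
    apply intervalIntegral.integral_mono_on hxy intervalIntegrable_const
      (qf_intble hN hc₁ hE ha hx hxy)
    intro z hz
    exact qf_mono hN hc₁ hE ha hx (le_trans hx hz.1) hz.1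
  simpa using h

lemma int_qf_upper (hN : IsNFunction ρ) (hc₁ : 0 < c₁) (hE : IsElliptic ρ c₁ c₂) (ha : 0 ≤ a)
    {x y : ℝ} (hx : 0 ≤ x) (hxy : x ≤ y) :
    (∫ τ in x..y, qf ρ a τ) ≤ (y - x) * qf ρ a y := by
  have h : (∫ τ in x..y, qf ρ a τ) ≤ ∫ _ in x..y, qf ρ a y := by
    apply intervalIntegral.integral_mono_on hxy (qf_intble hN hc₁ hE ha hx hxy)
      intervalIntegrable_const
    intro z hz
    exact qf_mono hN hc₁ hE ha (le_trans hx hz.1) (le_trans hx hxy) hz.2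
  simpa using h

lemma shiftN_nonneg (hN : IsNFunction ρ) (hc₁ : 0 < c₁) (hE : IsElliptic ρ c₁ c₂) (ha : 0 ≤ a)
    {s : ℝ} (hs : 0 ≤ s) : 0 ≤ shiftN ρ a s := by
  have := int_qf_lower hN hc₁ hE ha le_rfl hs
  rw [shiftN_eq]
  simp only [qf_zero, mul_zero] at this
  linarith

lemma shiftN_mono (hN : IsNFunction ρ) (hc₁ : 0 < c₁) (hE : IsElliptic ρ c₁ c₂) (ha : 0 ≤ a)
    {x y : ℝ} (hx : 0 ≤ x) (hxy : x ≤ y) : shiftN ρ a x ≤ shiftN ρ a y := by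
  have h := int_qf_lower hN hc₁ hE ha hx hxy
  have h2 := shiftN_diff hN hc₁ hE ha hx hxy
  have h3 : 0 ≤ qf ρ a x := qf_nonneg hN hE ha hx
  nlinarith

lemma qf_exists_eq (hN : IsNFunction ρ) (hc₁ : 0 < c₁) (hE : IsElliptic ρ c₁ c₂) (ha : 0 ≤ a)
    {t : ℝ} (ht : 0 ≤ t) : ∃ s, 0 ≤ s ∧ qf ρ a s = t := by
  have htop : Tendsto (qf ρ a) atTop atTop := by
    have hbig : ∀ᶠ s in atTop, deriv ρ s / 2 ≤ qf ρ a s := by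
      filter_upwards [eventually_ge_atTop (max a 1)] with s hs
      have hs1 : (1:ℝ) ≤ s := le_trans (le_max_right a 1) hs
      have hsa : a ≤ s := le_trans (le_max_left a 1) hs
      have hspos : (0:ℝ) < s := by linarith
      have has : 0 < a + s := by linarith
      rw [qf_eq has]
      have h1 : deriv ρ s ≤ deriv ρ (a + s) :=
        dmono hN hc₁ hE hspos.le (show (0:ℝ) ≤ a + s by linarith) (by linarith)
      have h2 : (1:ℝ)/2 ≤ s / (a + s) := by
        rw [le_div_iff₀ has]
        linarith
      have h3 : 0 ≤ deriv ρ s := dnonneg hN hE hspos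
      calc deriv ρ s / 2 = deriv ρ s * (1/2) := by ring
        _ ≤ deriv ρ (a + s) * (s / (a + s)) :=
          mul_le_mul h1 h2 (by norm_num) (le_trans h3 h1)
    exact tendsto_atTop_mono' _ hbig ((dtop hN hc₁ hE).atTop_div_const two_pos)
  obtain ⟨M, hM⟩ := ((htop.eventually_ge_atTop t).and (eventually_ge_atTop 0)).exists
  have hmem : t ∈ Icc (qf ρ a 0) (qf ρ a M) := by
    rw [qf_zero]; exact ⟨ht, hM.1⟩
  obtain ⟨s, hs, hseq⟩ := intermediate_value_Icc hM.2
    ((qf_cont hN hc₁ hE ha).mono Icc_subset_Ici_self) hmem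
  exact ⟨s, hs.1, hseq⟩

end Aux6

section Aux7
variable {ρ : ℝ → ℝ} {c₁ c₂ : ℝ} {a : ℝ}

-- integral bounds for deriv ρ
lemma int_d_lower (hN : IsNFunction ρ) (hc₁ : 0 < c₁) (hE : IsElliptic ρ c₁ c₂)
    {x y : ℝ} (hx : 0 ≤ x) (hxy : x ≤ y) :
    (y - x) * deriv ρ x ≤ ρ y - ρ x := by
  rw [← ftc hN hc₁ hE hx hxy]
  have h : (∫ _ in x..y, deriv ρ x) ≤ ∫ τ in x..y, deriv ρ τ := by
    apply intervalIntegral.integral_mono_on hxy intervalIntegrable_const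
    · apply MonotoneOn.intervalIntegrable
      intro u hu v hv huv
      rw [uIcc_of_le hxy] at hu hv
      exact dmono hN hc₁ hE (le_trans hx hu.1) (le_trans hx hv.1) huv
    · intro z hz
      exact dmono hN hc₁ hE hx (le_trans hx hz.1) hz.1
  simpa using h

lemma int_d_upper (hN : IsNFunction ρ) (hc₁ : 0 < c₁) (hE : IsElliptic ρ c₁ c₂)
    {x y : ℝ} (hx : 0 ≤ x) (hxy : x ≤ y) :
    ρ y - ρ x ≤ (y - x) * deriv ρ y := by
  rw [← ftc hN hc₁ hE hx hxy]
  have h : (∫ τ in x..y, deriv ρ τ) ≤ ∫ _ in x..y, deriv ρ y := by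
    apply intervalIntegral.integral_mono_on hxy
    · apply MonotoneOn.intervalIntegrable
      intro u hu v hv huv
      rw [uIcc_of_le hxy] at hu hv
      exact dmono hN hc₁ hE (le_trans hx hu.1) (le_trans hx hv.1) huv
    · exact intervalIntegrable_const
    · intro z hz
      exact dmono hN hc₁ hE (le_trans hx hz.1) (le_trans hx hxy) hz.2
  simpa using h

-- Young-type bound: for u ≥ 0 and s ≥ 0,  s*u - ρ s ≤ su*u - ρ su  where su = invD ρ u
lemma young_max (hN : IsNFunction ρ) (hc₁ : 0 < c₁) (hE : IsElliptic ρ c₁ c₂)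
    {u s : ℝ} (hu : 0 ≤ u) (hs : 0 ≤ s) :
    s * u - ρ s ≤ invD ρ u * u - ρ (invD ρ u) := by
  set su := invD ρ u with hsu
  have hsu0 : 0 ≤ su := invD_nonneg hN hc₁ hE hu
  have hder : deriv ρ su = u := deriv_invD hN hc₁ hE hu
  rcases le_or_gt s su with h | h
  · have := int_d_upper hN hc₁ hE hs h
    rw [hder] at this
    nlinarith
  · have := int_d_lower hN hc₁ hE hsu0 h.le
    rw [hder] at this
    nlinarith

lemma conjN_bddAbove (hN : IsNFunction ρ) (hc₁ : 0 < c₁) (hE : IsElliptic ρ c₁ c₂)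
    {u : ℝ} (hu : 0 ≤ u) :
    BddAbove {y | ∃ s ≥ 0, y = s * u - ρ s} := by
  refine ⟨invD ρ u * u - ρ (invD ρ u), ?_⟩
  rintro y ⟨s, hs, rfl⟩
  exact young_max hN hc₁ hE hu hs

lemma conjN_rho_eq (hN : IsNFunction ρ) (hc₁ : 0 < c₁) (hE : IsElliptic ρ c₁ c₂)
    {u : ℝ} (hu : 0 ≤ u) :
    conjN ρ u = invD ρ u * u - ρ (invD ρ u) := by
  apply le_antisymm
  · apply Real.sSup_le
    · rintro y ⟨s, hs, rfl⟩
      exact young_max hN hc₁ hE hu hs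
    · have := young_max hN hc₁ hE hu le_rfl
      simpa [hN.1] using this
  · apply le_csSup (conjN_bddAbove hN hc₁ hE hu)
    exact ⟨invD ρ u, invD_nonneg hN hc₁ hE hu, rfl⟩

lemma conjN_rho_lb (hN : IsNFunction ρ) (hc₁ : 0 < c₁) (hE : IsElliptic ρ c₁ c₂)
    {u s : ℝ} (hu : 0 ≤ u) (hs : 0 ≤ s) :
    s * u - ρ s ≤ conjN ρ u :=
  le_csSup (conjN_bddAbove hN hc₁ hE hu) ⟨s, hs, rfl⟩

lemma conj_sub (hN : IsNFunction ρ) (hc₁ : 0 < c₁) (hE : IsElliptic ρ c₁ c₂)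
    {u v : ℝ} (hu : 0 ≤ u) (hv : 0 ≤ v) :
    conjN ρ v - conjN ρ u ≤ invD ρ v * (v - u) := by
  have h1 := conjN_rho_eq hN hc₁ hE hv
  have h2 := conjN_rho_lb hN hc₁ hE hu (invD_nonneg hN hc₁ hE hv)
  nlinarith

lemma hasDerivAt_conjN (hN : IsNFunction ρ) (hc₁ : 0 < c₁) (hE : IsElliptic ρ c₁ c₂)
    {u : ℝ} (hu : 0 < u) : HasDerivAt (conjN ρ) (invD ρ u) u := by
  rw [hasDerivAt_iff_tendsto_slope]
  have ht1 : Tendsto (invD ρ) (nhds u) (nhds (invD ρ u)) := (invD_cont hN hc₁ hE).tendsto u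
  have ht2 : Tendsto (fun _ : ℝ => invD ρ u) (nhds u) (nhds (invD ρ u)) := tendsto_const_nhds
  have hlo : Tendsto (fun v => min (invD ρ v) (invD ρ u)) (nhdsWithin u {u}ᶜ)
      (nhds (invD ρ u)) := by
    have h := ht1.min ht2
    rw [min_self] at h
    exact h.mono_left nhdsWithin_le_nhds
  have hhi : Tendsto (fun v => max (invD ρ v) (invD ρ u)) (nhdsWithin u {u}ᶜ)
      (nhds (invD ρ u)) := by
    have h := ht1.max ht2
    rw [max_self] at h
    exact h.mono_left nhdsWithin_le_nhds
  refine tendsto_of_tendsto_of_tendsto_of_le_of_le' hlo hhi ?_ ?_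
  · filter_upwards [self_mem_nhdsWithin,
      mem_nhdsWithin_of_mem_nhds (isOpen_Ioi.mem_nhds hu)] with v hv hv0
    have hv0' : (0:ℝ) < v := hv0
    have hne : v ≠ u := hv
    have h1 := conj_sub hN hc₁ hE hv0'.le hu.le
    have h2 := conj_sub hN hc₁ hE hu.le hv0'.le
    rcases lt_or_gt_of_ne hne with h | h
    · -- v < u : slope ≥ invD v
      have : invD ρ v ≤ slope (conjN ρ) u v := by
        rw [slope_def_field, le_div_iff_of_neg (by linarith : v - u < 0)]
        nlinarith
      exact le_trans (min_le_left _ _) this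
    · -- v > u : slope ≥ invD u
      have : invD ρ u ≤ slope (conjN ρ) u v := by
        rw [slope_def_field, le_div_iff₀ (by linarith : 0 < v - u)]
        nlinarith
      exact le_trans (min_le_right _ _) this
  · filter_upwards [self_mem_nhdsWithin,
      mem_nhdsWithin_of_mem_nhds (isOpen_Ioi.mem_nhds hu)] with v hv hv0
    have hv0' : (0:ℝ) < v := hv0
    have hne : v ≠ u := hv
    have h1 := conj_sub hN hc₁ hE hv0'.le hu.le
    have h2 := conj_sub hN hc₁ hE hu.le hv0'.le
    rcases lt_or_gt_of_ne hne with h | h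
    · -- v < u : slope ≤ invD u
      have : slope (conjN ρ) u v ≤ invD ρ u := by
        rw [slope_def_field, div_le_iff_of_neg (by linarith : v - u < 0)]
        nlinarith
      exact le_trans this (le_max_right _ _)
    · -- v > u : slope ≤ invD v
      have : slope (conjN ρ) u v ≤ invD ρ v := by
        rw [slope_def_field, div_le_iff₀ (by linarith : 0 < v - u)]
        nlinarith
      exact le_trans this (le_max_left _ _)

end Aux7

noncomputable def Jf (ρ : ℝ → ℝ) (b : ℝ) : ℝ → ℝ :=
  fun τ => invD ρ (b + τ) / (b + τ) * τ

section Aux8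
variable {ρ : ℝ → ℝ} {c₁ c₂ : ℝ} {b : ℝ}

lemma Jf_zero : Jf ρ b 0 = 0 := by simp [Jf]

lemma Jf_eq {τ : ℝ} : Jf ρ b τ = invD ρ (b + τ) * (τ / (b + τ)) := by
  unfold Jf; ring

lemma Jf_nonneg (hN : IsNFunction ρ) (hc₁ : 0 < c₁) (hE : IsElliptic ρ c₁ c₂) (hb : 0 ≤ b)
    {τ : ℝ} (hτ : 0 ≤ τ) : 0 ≤ Jf ρ b τ := by
  rcases eq_or_lt_of_le (by positivity : (0:ℝ) ≤ b + τ) with h | h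
  · unfold Jf; rw [← h]; simp
  · rw [Jf_eq]
    have h3 : 0 ≤ invD ρ (b + τ) := invD_nonneg hN hc₁ hE h.le
    have h4 : 0 ≤ τ / (b + τ) := by positivity
    positivity

lemma Jf_mono (hN : IsNFunction ρ) (hc₁ : 0 < c₁) (hE : IsElliptic ρ c₁ c₂) (hb : 0 ≤ b) :
    MonotoneOn (Jf ρ b) (Ici 0) := by
  intro x hx y hy hxy
  have hx0 : (0:ℝ) ≤ x := hx
  have hy0 : (0:ℝ) ≤ y := hy
  rcases eq_or_lt_of_le hx0 with h | h
  · rw [← h, Jf_zero]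
    exact Jf_nonneg hN hc₁ hE hb hy0
  · have hbx : 0 < b + x := by linarith
    have hby : 0 < b + y := by linarith
    rw [Jf_eq, Jf_eq]
    have h1 : invD ρ (b + x) ≤ invD ρ (b + y) :=
      (invD_strictMono hN hc₁ hE).monotone (by linarith)
    have h2 : x / (b + x) ≤ y / (b + y) := by
      rw [div_le_div_iff₀ hbx hby]
      nlinarith
    have h3 : 0 ≤ invD ρ (b + x) := invD_nonneg hN hc₁ hE hbx.le
    have h4 : 0 ≤ x / (b + x) := by positivity
    exact mul_le_mul h1 h2 h4 (le_trans h3 h1)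

lemma Jf_intble (hN : IsNFunction ρ) (hc₁ : 0 < c₁) (hE : IsElliptic ρ c₁ c₂) (hb : 0 ≤ b)
    {x y : ℝ} (hx : 0 ≤ x) (hxy : x ≤ y) :
    IntervalIntegrable (Jf ρ b) MeasureTheory.volume x y := by
  apply MonotoneOn.intervalIntegrable
  intro u hu v hv huv
  rw [uIcc_of_le hxy] at hu hv
  exact Jf_mono hN hc₁ hE hb (le_trans hx hu.1) (le_trans hx hv.1) huv

lemma shiftN_conj_eq (hN : IsNFunction ρ) (hc₁ : 0 < c₁) (hE : IsElliptic ρ c₁ c₂)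
    (hb : 0 ≤ b) {t : ℝ} (ht : 0 ≤ t) :
    shiftN (conjN ρ) b t = ∫ τ in (0:ℝ)..t, Jf ρ b τ := by
  unfold shiftN
  apply intervalIntegral.integral_congr
  intro τ hτ
  rw [uIcc_of_le ht] at hτ
  rcases eq_or_lt_of_le hτ.1 with h | h
  · rw [← h]
    simp [Jf_zero]
  · have hbτ : 0 < b + τ := by linarith
    unfold Jf
    show deriv (conjN ρ) (b + τ) / (b + τ) * τ = invD ρ (b + τ) / (b + τ) * τ
    rw [(hasDerivAt_conjN hN hc₁ hE hbτ).deriv]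

lemma int_Jf_lower (hN : IsNFunction ρ) (hc₁ : 0 < c₁) (hE : IsElliptic ρ c₁ c₂) (hb : 0 ≤ b)
    {x y : ℝ} (hx : 0 ≤ x) (hxy : x ≤ y) :
    (y - x) * Jf ρ b x ≤ ∫ τ in x..y, Jf ρ b τ := by
  have h : (∫ _ in x..y, Jf ρ b x) ≤ ∫ τ in x..y, Jf ρ b τ := by
    apply intervalIntegral.integral_mono_on hxy intervalIntegrable_const
      (Jf_intble hN hc₁ hE hb hx hxy)
    intro z hz
    exact Jf_mono hN hc₁ hE hb hx (le_trans hx hz.1) hz.1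
  simpa using h

lemma int_Jf_upper (hN : IsNFunction ρ) (hc₁ : 0 < c₁) (hE : IsElliptic ρ c₁ c₂) (hb : 0 ≤ b)
    {x y : ℝ} (hx : 0 ≤ x) (hxy : x ≤ y) :
    (∫ τ in x..y, Jf ρ b τ) ≤ (y - x) * Jf ρ b y := by
  have h : (∫ τ in x..y, Jf ρ b τ) ≤ ∫ _ in x..y, Jf ρ b y := by
    apply intervalIntegral.integral_mono_on hxy (Jf_intble hN hc₁ hE hb hx hxy)
      intervalIntegrable_const
    intro z hz
    exact Jf_mono hN hc₁ hE hb (le_trans hx hz.1) (le_trans hx hxy) hz.2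
  simpa using h

lemma RHS_up (hN : IsNFunction ρ) (hc₁ : 0 < c₁) (hE : IsElliptic ρ c₁ c₂)
    (hb : 0 ≤ b) {t : ℝ} (ht : 0 ≤ t) :
    shiftN (conjN ρ) b t ≤ t * Jf ρ b t := by
  rw [shiftN_conj_eq hN hc₁ hE hb ht]
  have := int_Jf_upper hN hc₁ hE hb le_rfl ht
  simpa using this

lemma RHS_low (hN : IsNFunction ρ) (hc₁ : 0 < c₁) (hE : IsElliptic ρ c₁ c₂)
    (hb : 0 ≤ b) {t : ℝ} (ht : 0 ≤ t) :
    (t/2) * Jf ρ b (t/2) ≤ shiftN (conjN ρ) b t := by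
  rw [shiftN_conj_eq hN hc₁ hE hb ht]
  have hsplit : (∫ τ in (0:ℝ)..(t/2), Jf ρ b τ) + (∫ τ in (t/2)..t, Jf ρ b τ)
      = ∫ τ in (0:ℝ)..t, Jf ρ b τ :=
    intervalIntegral.integral_add_adjacent_intervals
      (Jf_intble hN hc₁ hE hb le_rfl (by linarith))
      (Jf_intble hN hc₁ hE hb (by linarith) (by linarith))
  have h1 : (0:ℝ) ≤ ∫ τ in (0:ℝ)..(t/2), Jf ρ b τ := by
    have := int_Jf_lower hN hc₁ hE hb le_rfl (by linarith : (0:ℝ) ≤ t/2)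
    simpa [Jf_zero] using this
  have h2 := int_Jf_lower hN hc₁ hE hb (by linarith : (0:ℝ) ≤ t/2) (by linarith : t/2 ≤ t)
  have he : (t - t/2) = t/2 := by ring
  rw [he] at h2
  linarith

end Aux8

section Aux9
variable {ρ : ℝ → ℝ} {c₁ c₂ : ℝ} {a : ℝ}

lemma young_shift (hN : IsNFunction ρ) (hc₁ : 0 < c₁) (hE : IsElliptic ρ c₁ c₂) (ha : 0 ≤ a)
    {t st s : ℝ} (ht : 0 ≤ t) (hst : 0 ≤ st) (hq : qf ρ a st = t) (hs : 0 ≤ s) :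
    s * t - shiftN ρ a s ≤ t * st := by
  rcases le_or_gt s st with h | h
  · have h1 : 0 ≤ shiftN ρ a s := shiftN_nonneg hN hc₁ hE ha hs
    nlinarith
  · have h2 := shiftN_diff hN hc₁ hE ha hst h.le
    have h3 := int_qf_lower hN hc₁ hE ha hst h.le
    rw [hq] at h3
    have h4 : 0 ≤ shiftN ρ a st := shiftN_nonneg hN hc₁ hE ha hst
    nlinarith

lemma LHS_up (hN : IsNFunction ρ) (hc₁ : 0 < c₁) (hE : IsElliptic ρ c₁ c₂) (ha : 0 ≤ a)
    {t st : ℝ} (ht : 0 ≤ t) (hst : 0 ≤ st) (hq : qf ρ a st = t) :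
    conjN (shiftN ρ a) t ≤ t * st := by
  apply Real.sSup_le
  · rintro y ⟨s, hs, rfl⟩
    exact young_shift hN hc₁ hE ha ht hst hq hs
  · positivity

lemma LHS_bdd (hN : IsNFunction ρ) (hc₁ : 0 < c₁) (hE : IsElliptic ρ c₁ c₂) (ha : 0 ≤ a)
    {t st : ℝ} (ht : 0 ≤ t) (hst : 0 ≤ st) (hq : qf ρ a st = t) :
    BddAbove {y | ∃ s ≥ 0, y = s * t - shiftN ρ a s} := by
  refine ⟨t * st, ?_⟩
  rintro y ⟨s, hs, rfl⟩
  exact young_shift hN hc₁ hE ha ht hst hq hs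

lemma LHS_low (hN : IsNFunction ρ) (hc₁ : 0 < c₁) (hE : IsElliptic ρ c₁ c₂) (ha : 0 ≤ a)
    {t st s₀ : ℝ} (ht : 0 ≤ t) (hst : 0 ≤ st) (hq : qf ρ a st = t)
    (hs₀ : 0 ≤ s₀) (hq₀ : qf ρ a s₀ = t/2) :
    s₀ * (t/2) ≤ conjN (shiftN ρ a) t := by
  have hmem : s₀ * t - shiftN ρ a s₀ ∈ {y | ∃ s ≥ 0, y = s * t - shiftN ρ a s} :=
    ⟨s₀, hs₀, rfl⟩
  have hle := le_csSup (LHS_bdd hN hc₁ hE ha ht hst hq) hmem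
  have hub : shiftN ρ a s₀ ≤ s₀ * (t/2) := by
    have h1 := int_qf_upper hN hc₁ hE ha le_rfl hs₀
    have h2 : shiftN ρ a s₀ = ∫ τ in (0:ℝ)..s₀, qf ρ a τ := shiftN_eq s₀
    rw [hq₀] at h1
    rw [h2]
    nlinarith
  calc s₀ * (t/2) = s₀ * t - s₀ * (t/2) := by ring
    _ ≤ s₀ * t - shiftN ρ a s₀ := by linarith
    _ ≤ conjN (shiftN ρ a) t := hle

lemma conjN_shift_zero (hN : IsNFunction ρ) (hc₁ : 0 < c₁) (hE : IsElliptic ρ c₁ c₂)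
    (ha : 0 ≤ a) : conjN (shiftN ρ a) 0 = 0 := by
  have h0 : qf ρ a 0 = 0 := qf_zero
  apply le_antisymm
  · have := LHS_up hN hc₁ hE ha le_rfl le_rfl h0
    simpa using this
  · have hmem : (0:ℝ) * 0 - shiftN ρ a 0 ∈ {y | ∃ s ≥ 0, y = s * 0 - shiftN ρ a s} :=
      ⟨0, le_rfl, rfl⟩
    have hle := le_csSup (LHS_bdd hN hc₁ hE ha le_rfl le_rfl h0) hmem
    have h00 : shiftN ρ a 0 = 0 := by
      rw [shiftN_eq, intervalIntegral.integral_same]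
    rw [h00] at hle
    simpa [conjN] using hle

end Aux9

section Aux10
variable {ρ : ℝ → ℝ} {c₁ c₂ : ℝ} {a : ℝ}

lemma b_nonneg (hN : IsNFunction ρ) (hE : IsElliptic ρ c₁ c₂) (ha : 0 ≤ a) :
    0 ≤ deriv ρ a := by
  rcases eq_or_lt_of_le ha with h | h
  · rw [← h, d0 hN]
  · exact dnonneg hN hE h

set_option maxHeartbeats 2000000 in
lemma core (hN : IsNFunction ρ) (hc₁ : 0 < c₁) (hc₂ : 0 < c₂) (hE : IsElliptic ρ c₁ c₂)
    (ha : 0 ≤ a) {s : ℝ} (hs : 0 < s) :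
    s ≤ (4 * (2:ℝ)^(1/c₁) + 2*(1 + (2:ℝ)^c₂)) * Jf ρ (deriv ρ a) (qf ρ a s) ∧
    Jf ρ (deriv ρ a) (qf ρ a s) ≤
      (2 * (2:ℝ)^(1/c₁) + (2:ℝ)^c₂ * (1+(2:ℝ)^c₂)^(1/c₁)) * s := by
  set b := deriv ρ a with hbdef
  set A := (2:ℝ)^(1/c₁) with hAdef
  set B2 := (2:ℝ)^c₂ with hB2def
  set P := (1+B2)^(1/c₁) with hPdef
  have hA : 1 ≤ A := Real.one_le_rpow one_le_two (by positivity)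
  have hB2 : 1 ≤ B2 := Real.one_le_rpow one_le_two hc₂.le
  have hP1 : 1 ≤ P := Real.one_le_rpow (by linarith) (by positivity)
  have hb0 : 0 ≤ b := b_nonneg hN hE ha
  have hu : 0 < a + s := by linarith
  set u := a + s with hudef
  set v := deriv ρ u with hvdef
  have hv : 0 < v := dpos hN hc₁ hE hu
  set t := qf ρ a s with htdef
  have ht_eq : t = v * (s/u) := by
    rw [htdef, qf_eq (by rw [← hudef]; exact hu)]
  have htu : t * u = v * s := by rw [ht_eq]; field_simp
  have ht_pos : 0 < t := by rw [ht_eq]; positivity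
  have hbv : b ≤ v := dmono hN hc₁ hE ha hu.le (by linarith)
  have htv : t ≤ v := by
    rw [ht_eq]
    apply mul_le_of_le_one_right hv.le
    rw [div_le_one hu]
    linarith
  have hD : 0 < b + t := by linarith
  set m := invD ρ (b + t) with hmdef
  have hm0 : 0 ≤ m := invD_nonneg hN hc₁ hE hD.le
  have hJ : Jf ρ b t = m * t / (b + t) := by unfold Jf; ring
  have hJ0 : 0 ≤ Jf ρ b t := Jf_nonneg hN hc₁ hE hb0 ht_pos.le
  have hiv : invD ρ v = u := invD_deriv hN hc₁ hE hu.le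
  have hba : invD ρ b = a := by rw [hbdef]; exact invD_deriv hN hc₁ hE ha
  clear_value b A B2 P u v t m
  rcases le_total a s with hcase | hcase
  · -- Case A : a ≤ s
    have hsu : s ≤ u := by rw [hudef]; linarith
    have hu2s : u ≤ 2*s := by rw [hudef]; linarith
    have hv2t : v ≤ 2*t := by
      nlinarith [mul_le_mul_of_nonneg_left hu2s ht_pos.le]
    have hDle : b + t ≤ 2*v := by linarith
    have hmAu : m ≤ A * u := by
      have h1 : m ≤ invD ρ (2*v) := by
        rw [hmdef]; exact (invD_strictMono hN hc₁ hE).monotone hDle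
      have h2 := invD_dbl hN hc₁ hE hv.le one_le_two
      rw [hiv, ← hAdef] at h2
      exact le_trans h1 h2
    have hAmu : u ≤ A * m := by
      have h1 : invD ρ (v/2) ≤ m := by
        rw [hmdef]; exact (invD_strictMono hN hc₁ hE).monotone (by linarith)
      have h2 := invD_dbl hN hc₁ hE (by positivity : (0:ℝ) ≤ v/2) one_le_two
      rw [show 2*(v/2) = v by ring, hiv, ← hAdef] at h2
      calc u ≤ A * invD ρ (v/2) := h2
        _ ≤ A * m := mul_le_mul_of_nonneg_left h1 (by linarith)
    constructor
    · -- lower bound on J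
      have key : s * (b + t) ≤ 4*A*(m*t) := by
        have st1 : s * (b+t) ≤ u * (2*v) :=
          mul_le_mul hsu hDle hD.le (by linarith)
        have st2 : u * (2*v) ≤ (A*m) * (2*(2*t)) :=
          mul_le_mul hAmu (by linarith) (by linarith) (mul_nonneg (by linarith) hm0)
        nlinarith [st1, st2]
      have h4A : s ≤ 4*A * Jf ρ b t := by
        rw [hJ, mul_div_assoc', le_div_iff₀ hD]
        nlinarith [key]
      have hpos : 0 ≤ 2*(1+B2) * Jf ρ b t := mul_nonneg (by linarith) hJ0
      linarith
    · -- upper bound on J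
      have hJm : Jf ρ b t ≤ m := by
        rw [hJ, div_le_iff₀ hD]
        nlinarith [mul_le_mul_of_nonneg_left (show t ≤ b + t by linarith) hm0]
      have hm2As : m ≤ 2*A*s := by
        have := mul_le_mul_of_nonneg_left hu2s (by linarith : (0:ℝ) ≤ A)
        linarith
      have hpos : 0 ≤ B2 * P * s := mul_nonneg (mul_nonneg (by linarith) (by linarith)) hs.le
      linarith
  · -- Case B : s ≤ a
    have ha_pos : 0 < a := lt_of_lt_of_le hs hcase
    have hb_pos : 0 < b := by rw [hbdef]; exact dpos hN hc₁ hE ha_pos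
    have hau : a ≤ u := by rw [hudef]; linarith
    have hu2a : u ≤ 2*a := by rw [hudef]; linarith
    have hvB : v ≤ B2 * b := by
      have h1 := dbl_up hN hc₂ hE ha_pos hau
      rw [← hvdef, ← hbdef] at h1
      have h2 : (u/a) ^ c₂ ≤ B2 := by
        rw [hB2def]
        apply Real.rpow_le_rpow (by positivity) _ hc₂.le
        rw [div_le_iff₀ ha_pos]
        linarith
      have h3 : b * (u/a)^c₂ ≤ b * B2 := mul_le_mul_of_nonneg_left h2 hb0
      calc v ≤ b * (u/a)^c₂ := h1
        _ ≤ b * B2 := h3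
        _ = B2 * b := by ring
    have htB : t ≤ B2 * b := le_trans htv hvB
    have hD_ub : b + t ≤ (1+B2)*b := by nlinarith
    have hma : a ≤ m := by
      rw [← hba, hmdef]
      exact (invD_strictMono hN hc₁ hE).monotone (by linarith)
    have hmP : m ≤ P * a := by
      have h1 : m ≤ invD ρ ((1+B2)*b) := by
        rw [hmdef]; exact (invD_strictMono hN hc₁ hE).monotone hD_ub
      have h2 := invD_dbl hN hc₁ hE hb_pos.le (by linarith : (1:ℝ) ≤ 1+B2)
      rw [hba, ← hPdef] at h2
      exact le_trans h1 h2
    constructor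
    · -- lower bound on J
      have k1 : s * b ≤ 2*(a*t) := by
        have j1 : s * b ≤ s * v := mul_le_mul_of_nonneg_left hbv hs.le
        have j2 : t * u ≤ t * (2*a) := mul_le_mul_of_nonneg_left hu2a ht_pos.le
        nlinarith [j1, j2, htu]
      have key : s * (b+t) ≤ 2*(1+B2)*(m*t) := by
        have j1 : s * (b+t) ≤ s * ((1+B2)*b) := mul_le_mul_of_nonneg_left hD_ub hs.le
        have j2 : (1+B2)*(s*b) ≤ (1+B2)*(2*(a*t)) :=
          mul_le_mul_of_nonneg_left k1 (by linarith)
        have j3 : a*t ≤ m*t := mul_le_mul_of_nonneg_right hma ht_pos.le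
        have j4 : (1+B2)*(2*(a*t)) ≤ (1+B2)*(2*(m*t)) := by
          apply mul_le_mul_of_nonneg_left _ (by linarith : (0:ℝ) ≤ 1+B2)
          linarith
        nlinarith [j1, j2, j4]
      have h2B : s ≤ 2*(1+B2) * Jf ρ b t := by
        rw [hJ, mul_div_assoc', le_div_iff₀ hD]
        nlinarith [key]
      have hpos : 0 ≤ 4*A * Jf ρ b t := mul_nonneg (by linarith) hJ0
      linarith
    · -- upper bound on J
      have k1 : a*t ≤ B2*(b*s) := by
        have j1 : a * t ≤ u * t := mul_le_mul_of_nonneg_right hau ht_pos.le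
        have j2 : v * s ≤ (B2*b) * s := mul_le_mul_of_nonneg_right hvB hs.le
        nlinarith [j1, j2, htu]
      have key : m*t ≤ B2*P*s*(b+t) := by
        have j1 : m*t ≤ (P*a)*t := mul_le_mul_of_nonneg_right hmP ht_pos.le
        have j2 : P*(a*t) ≤ P*(B2*(b*s)) := mul_le_mul_of_nonneg_left k1 (by linarith)
        have j3 : b*s ≤ (b+t)*s := mul_le_mul_of_nonneg_right (by linarith) hs.le
        have j4 : (P*B2)*(b*s) ≤ (P*B2)*((b+t)*s) :=
          mul_le_mul_of_nonneg_left j3 (mul_nonneg (by linarith) (by linarith))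
        nlinarith [j1, j2, j4]
      have hBP : Jf ρ b t ≤ B2*P*s := by
        rw [hJ, div_le_iff₀ hD]
        nlinarith [key]
      have hpos : 0 ≤ 2*A*s := mul_nonneg (by linarith) hs.le
      linarith

end Aux10

section Aux11
variable {ρ : ℝ → ℝ} {c₁ c₂ : ℝ} {b : ℝ}

lemma Jf_half (hN : IsNFunction ρ) (hc₁ : 0 < c₁) (hE : IsElliptic ρ c₁ c₂)
    (hb : 0 ≤ b) {t : ℝ} (ht : 0 < t) :
    Jf ρ b t ≤ 2*(2:ℝ)^(1/c₁) * Jf ρ b (t/2) := by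
  set A := (2:ℝ)^(1/c₁) with hAdef
  have hA : 1 ≤ A := Real.one_le_rpow one_le_two (by positivity)
  have hD : 0 < b + t := by linarith
  have hD2 : 0 < b + t/2 := by linarith
  set m1 := invD ρ (b + t) with hm1def
  set m2 := invD ρ (b + t/2) with hm2def
  have hm2 : 0 ≤ m2 := invD_nonneg hN hc₁ hE hD2.le
  have h1 : m1 ≤ A * m2 := by
    have e1 : b + t = 2*((b+t)/2) := by ring
    have h2 := invD_dbl hN hc₁ hE (by linarith : (0:ℝ) ≤ (b+t)/2) one_le_two
    have h3 : invD ρ ((b+t)/2) ≤ m2 :=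
      (invD_strictMono hN hc₁ hE).monotone (by linarith)
    calc m1 = invD ρ (2*((b+t)/2)) := by rw [hm1def, ← e1]
      _ ≤ A * invD ρ ((b+t)/2) := by rw [hAdef]; exact h2
      _ ≤ A * m2 := mul_le_mul_of_nonneg_left h3 (by linarith)
  have hgoal : m1 * t / (b+t) ≤ (A*m2) * t / (b + t/2) := by
    apply div_le_div₀ (by positivity) _ hD2 (by linarith)
    exact mul_le_mul_of_nonneg_right h1 ht.le
  calc Jf ρ b t = m1 * t / (b+t) := by unfold Jf; ring
    _ ≤ (A*m2) * t / (b + t/2) := hgoal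
    _ = 2*A * (m2 / (b + t/2) * (t/2)) := by field_simp
    _ = 2*A * Jf ρ b (t/2) := by unfold Jf; rw [← hm2def]

end Aux11


set_option maxHeartbeats 1000000 in
/-- conjugate of the shifted N-function. For an elliptic
N-function `ρ`, `(ρ_a)*(t) ∼ (ρ*)_{ρ'(a)}(t)` uniformly in `a, t ≥ 0`, with
constants depending only on the characteristics of `ρ`. -/
theorem statement9 (ρ : ℝ → ℝ) (c₁ c₂ : ℝ) (hc₁ : 0 < c₁) (hc₂ : 0 < c₂)
    (hN : IsNFunction ρ) (hE : IsElliptic ρ c₁ c₂) :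
    ∃ C > 0, ∀ a ≥ (0:ℝ), ∀ t ≥ (0:ℝ),
      conjN (shiftN ρ a) t ≤ C * shiftN (conjN ρ) (deriv ρ a) t ∧
      shiftN (conjN ρ) (deriv ρ a) t ≤ C * conjN (shiftN ρ a) t := by
  refine ⟨4*(2:ℝ)^(1/c₁) * ((4 * (2:ℝ)^(1/c₁) + 2*(1 + (2:ℝ)^c₂)) +
    (2 * (2:ℝ)^(1/c₁) + (2:ℝ)^c₂ * (1+(2:ℝ)^c₂)^(1/c₁))), by positivity, ?_⟩
  intro a ha t ht
  set A := (2:ℝ)^(1/c₁) with hAdef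
  set B2 := (2:ℝ)^c₂ with hB2def
  set P := (1+B2)^(1/c₁) with hPdef
  set K₁ := 4*A + 2*(1+B2) with hK₁def
  set K₂ := 2*A + B2*P with hK₂def
  have hA : 1 ≤ A := Real.one_le_rpow one_le_two (by positivity)
  have hB2 : 1 ≤ B2 := Real.one_le_rpow one_le_two hc₂.le
  have hP1 : 1 ≤ P := Real.one_le_rpow (by linarith) (by positivity)
  have hK₁0 : 0 ≤ K₁ := by rw [hK₁def]; nlinarith
  have hK₂0 : 0 ≤ K₂ := by rw [hK₂def]; nlinarith
  set b := deriv ρ a with hbdef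
  have hb : 0 ≤ b := b_nonneg hN hE ha
  rcases eq_or_lt_of_le ht with h0 | htpos
  · -- t = 0
    have hL : conjN (shiftN ρ a) 0 = 0 := conjN_shift_zero hN hc₁ hE ha
    have hR : shiftN (conjN ρ) b 0 = 0 := by
      unfold shiftN; exact intervalIntegral.integral_same
    rw [← h0, hL, hR]
    constructor <;> simp
  · -- t > 0
    obtain ⟨st, hst0, hstq⟩ := qf_exists_eq hN hc₁ hE ha ht
    obtain ⟨s₀, hs₀0, hs₀q⟩ := qf_exists_eq hN hc₁ hE ha (by linarith : (0:ℝ) ≤ t/2)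
    have hstpos : 0 < st := by
      rcases eq_or_lt_of_le hst0 with h | h
      · exfalso; rw [← h, qf_zero] at hstq; linarith
      · exact h
    have hs₀pos : 0 < s₀ := by
      rcases eq_or_lt_of_le hs₀0 with h | h
      · exfalso; rw [← h, qf_zero] at hs₀q; linarith
      · exact h
    set J := Jf ρ b t with hJdef
    set J2 := Jf ρ b (t/2) with hJ2def
    have hJ0 : 0 ≤ J := Jf_nonneg hN hc₁ hE hb ht
    have hJ20 : 0 ≤ J2 := Jf_nonneg hN hc₁ hE hb (by linarith)
    have f1 : conjN (shiftN ρ a) t ≤ t * st := LHS_up hN hc₁ hE ha ht hst0 hstq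
    have f2 : st ≤ K₁ * J := by
      have h := (core hN hc₁ hc₂ hE ha hstpos).1
      rw [hstq] at h
      rw [hK₁def, hJdef, hbdef]
      exact h
    have f3 : (t/2) * J2 ≤ shiftN (conjN ρ) b t := RHS_low hN hc₁ hE hb ht.le
    have f4 : J ≤ 2*A * J2 := by
      rw [hJdef, hJ2def, hAdef]
      exact Jf_half hN hc₁ hE hb htpos
    have f5 : shiftN (conjN ρ) b t ≤ t * J := RHS_up hN hc₁ hE hb ht.le
    have f6 : J2 ≤ K₂ * s₀ := by
      have h := (core hN hc₁ hc₂ hE ha hs₀pos).2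
      rw [hs₀q] at h
      rw [hK₂def, hJ2def, hbdef]
      exact h
    have f7 : s₀ * (t/2) ≤ conjN (shiftN ρ a) t :=
      LHS_low hN hc₁ hE ha ht.le hst0 hstq hs₀0 hs₀q
    have hR0 : 0 ≤ shiftN (conjN ρ) b t := le_trans (by positivity) f3
    have hL0 : 0 ≤ conjN (shiftN ρ a) t := le_trans (by positivity) f7
    constructor
    · -- LHS ≤ C * RHS
      have c1 : conjN (shiftN ρ a) t ≤ t * (K₁ * J) :=
        le_trans f1 (mul_le_mul_of_nonneg_left f2 ht.le)
      have c2 : t * (K₁ * J) ≤ t * (K₁ * (2*A*J2)) :=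
        mul_le_mul_of_nonneg_left (mul_le_mul_of_nonneg_left f4 hK₁0) ht.le
      have c3 : t * (K₁ * (2*A*J2)) = (4*A*K₁) * ((t/2) * J2) := by ring
      have c4 : (4*A*K₁) * ((t/2) * J2) ≤ (4*A*K₁) * shiftN (conjN ρ) b t :=
        mul_le_mul_of_nonneg_left f3 (by nlinarith)
      have c5 : (4*A*K₁) * shiftN (conjN ρ) b t ≤ (4*A*(K₁+K₂)) * shiftN (conjN ρ) b t := by
        apply mul_le_mul_of_nonneg_right _ hR0
        nlinarith
      calc conjN (shiftN ρ a) t ≤ t * (K₁ * J) := c1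
        _ ≤ t * (K₁ * (2*A*J2)) := c2
        _ = (4*A*K₁) * ((t/2) * J2) := c3
        _ ≤ (4*A*K₁) * shiftN (conjN ρ) b t := c4
        _ ≤ (4*A*(K₁+K₂)) * shiftN (conjN ρ) b t := c5
    · -- RHS ≤ C * LHS
      have c1 : shiftN (conjN ρ) b t ≤ t * (2*A*J2) :=
        le_trans f5 (mul_le_mul_of_nonneg_left f4 ht.le)
      have c2 : t * (2*A*J2) ≤ t * (2*A*(K₂*s₀)) := by
        apply mul_le_mul_of_nonneg_left _ ht.le
        apply mul_le_mul_of_nonneg_left f6 (by linarith)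
      have c3 : t * (2*A*(K₂*s₀)) = (4*A*K₂) * (s₀ * (t/2)) := by ring
      have c4 : (4*A*K₂) * (s₀ * (t/2)) ≤ (4*A*K₂) * conjN (shiftN ρ a) t :=
        mul_le_mul_of_nonneg_left f7 (by nlinarith)
      have c5 : (4*A*K₂) * conjN (shiftN ρ a) t ≤ (4*A*(K₁+K₂)) * conjN (shiftN ρ a) t := by
        apply mul_le_mul_of_nonneg_right _ hL0
        nlinarith
      calc shiftN (conjN ρ) b t ≤ t * (2*A*J2) := c1
        _ ≤ t * (2*A*(K₂*s₀)) := c2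
        _ = (4*A*K₂) * (s₀ * (t/2)) := c3
        _ ≤ (4*A*K₂) * conjN (shiftN ρ a) t := c4
        _ ≤ (4*A*(K₁+K₂)) * conjN (shiftN ρ a) t := c5
end

section
/- Let ρ be an elliptic N-function and set A(ξ) := (ρ'(|ξ|)/|ξ|) ξ for ξ ∈ ℝ^{n×n}. Then uniformly in P, Q ∈ ℝ^{n×n}: |A(P) − A(Q)| ∼ (ρ_{|P|})'(|P − Q|), where ρ_{|P|} is the N-function ρ shifted by |P|, with constants depending only on the characteristics of ρ. -/
open Set Filter

/-- The tensor `A^ρ(ξ) = (ρ'(|ξ|)/|ξ|) ξ` on `ℝ^{n×n}` (Frobenius structure). -/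
noncomputable def AtensR (n : ℕ) (ρ : ℝ → ℝ) (ξ : EuclideanSpace ℝ (Fin n × Fin n)) :
    EuclideanSpace ℝ (Fin n × Fin n) :=
  (deriv ρ ‖ξ‖ / ‖ξ‖) • ξ

namespace St13
variable {ρ : ℝ → ℝ} {c₁ c₂ : ℝ}

lemma rpow_slope_low {c x : ℝ} (hc0 : 0 < c) (hc1 : c ≤ 1) (h1 : 1 ≤ x) (h2 : x ≤ 2) :
    c / 2 * (x - 1) ≤ x ^ c - 1 := by
  rcases eq_or_lt_of_le h1 with h | h
  · simp [← h]
  · obtain ⟨ξ, hξ, hs⟩ := exists_deriv_eq_slope (fun y : ℝ => y ^ c) h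
      (ContinuousOn.rpow_const continuousOn_id (fun y hy => Or.inl (by

        have := hy.1; intro h0; rw [h0] at this; linarith)))
      (fun y hy => (Real.hasDerivAt_rpow_const
        (Or.inl (by have := hy.1; intro h0; rw [h0] at this; linarith))).differentiableAt.differentiableWithinAt)
    have hξ0 : (0:ℝ) < ξ := lt_trans one_pos hξ.1
    have hd : deriv (fun y : ℝ => y ^ c) ξ = c * ξ ^ (c - 1) :=
      (Real.hasDerivAt_rpow_const (Or.inl hξ0.ne')).deriv
    rw [hd, Real.one_rpow] at hs
    have hs' : x ^ c - 1 = c * ξ ^ (c - 1) * (x - 1) := by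
      rw [eq_div_iff (by linarith : x - 1 ≠ 0)] at hs
      linarith [hs]
    have hξ2 : ξ ≤ 2 := le_trans hξ.2.le h2
    have hb : (2:ℝ) ^ (c - 1) ≤ ξ ^ (c - 1) :=
      Real.rpow_le_rpow_of_nonpos hξ0 hξ2 (by linarith)
    have hb2 : (2:ℝ)⁻¹ ≤ (2:ℝ) ^ (c - 1) := by
      have := Real.rpow_le_rpow_of_exponent_le (x := 2) (by norm_num) (show (-1:ℝ) ≤ c - 1 by linarith)
      rwa [Real.rpow_neg_one] at this
    have hx1 : (0:ℝ) < x - 1 := by linarith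
    have : c / 2 ≤ c * ξ ^ (c - 1) := by
      have : (2:ℝ)⁻¹ ≤ ξ ^ (c-1) := le_trans hb2 hb
      nlinarith
    nlinarith [hs', this]

lemma rpow_slope_up {c x : ℝ} (hc1 : 1 ≤ c) (h1 : 1 ≤ x) (h2 : x ≤ 2) :
    x ^ c - 1 ≤ c * 2 ^ c * (x - 1) := by
  rcases eq_or_lt_of_le h1 with h | h
  · simp [← h]
  · obtain ⟨ξ, hξ, hs⟩ := exists_deriv_eq_slope (fun y : ℝ => y ^ c) h
      (ContinuousOn.rpow_const continuousOn_id (fun y hy => Or.inr (by linarith)))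
      (fun y hy => (Real.hasDerivAt_rpow_const (Or.inr hc1)).differentiableAt.differentiableWithinAt)
    have hξ0 : (0:ℝ) < ξ := lt_trans one_pos hξ.1
    have hd : deriv (fun y : ℝ => y ^ c) ξ = c * ξ ^ (c - 1) :=
      (Real.hasDerivAt_rpow_const (Or.inl hξ0.ne')).deriv
    rw [hd, Real.one_rpow] at hs
    have hξ2 : ξ ≤ 2 := le_trans hξ.2.le h2
    have hb : ξ ^ (c - 1) ≤ 2 ^ (c - 1) := Real.rpow_le_rpow hξ0.le hξ2 (by linarith)
    have hb2 : (2:ℝ) ^ (c - 1) ≤ 2 ^ c :=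
      Real.rpow_le_rpow_of_exponent_le (by norm_num) (by linarith)
    have hx1 : (0:ℝ) < x - 1 := by linarith
    have h2c : (0:ℝ) < 2 ^ c := Real.rpow_pos_of_pos (by norm_num) c
    have hs' : x ^ c - 1 = c * ξ ^ (c - 1) * (x - 1) := by
      rw [eq_div_iff (by linarith : x - 1 ≠ 0)] at hs
      linarith [hs]
    have : c * ξ ^ (c-1) ≤ c * 2 ^ c := by nlinarith [le_trans hb hb2]
    nlinarith [hs']

lemma hasDerivAt_deriv2 (hE : IsElliptic ρ c₁ c₂) {t : ℝ} (ht : 0 < t) :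
    HasDerivAt (deriv ρ) (deriv (deriv ρ) t) t := by
  have h1 : ContDiffOn ℝ 1 (deriv ρ) (Ioi 0) :=
    hE.2.1.deriv_of_isOpen isOpen_Ioi (by norm_num)
  exact ((h1.differentiableOn (by norm_num)).differentiableAt
    (Ioi_mem_nhds ht)).hasDerivAt

lemma contOn_deriv (hE : IsElliptic ρ c₁ c₂) : ContinuousOn (deriv ρ) (Ioi 0) :=
  hE.2.1.continuousOn_deriv_of_isOpen isOpen_Ioi (by norm_num)

lemma grow_aux (hE : IsElliptic ρ c₁ c₂) {t s : ℝ} (ht : 0 < t) (hts : t ≤ s) :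
    (deriv ρ s * s ^ (-c₂) ≤ deriv ρ t * t ^ (-c₂)) ∧
    (deriv ρ t * t ^ (-c₁) ≤ deriv ρ s * s ^ (-c₁)) := by
  have hsub : Icc t s ⊆ Ioi 0 := fun x hx => lt_of_lt_of_le ht hx.1
  have hsub' : Ioo t s ⊆ Ioi 0 := fun x hx => lt_trans ht hx.1
  have hmem_t : t ∈ Icc t s := ⟨le_refl t, hts⟩
  have hmem_s : s ∈ Icc t s := ⟨hts, le_refl s⟩
  constructor
  · set φ := fun τ : ℝ => deriv ρ τ * τ ^ (-c₂) with hφ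
    have hder : ∀ τ ∈ Ioo t s, HasDerivAt φ
        (deriv (deriv ρ) τ * τ ^ (-c₂) + deriv ρ τ * (-c₂ * τ ^ (-c₂ - 1))) τ := by
      intro τ hτ
      exact (hasDerivAt_deriv2 hE (hsub' hτ)).mul
        (Real.hasDerivAt_rpow_const (Or.inl (hsub' hτ).ne'))
    have hanti : AntitoneOn φ (Icc t s) := by
      apply antitoneOn_of_deriv_nonpos (convex_Icc t s)
      · exact ((contOn_deriv hE).mono hsub).mul
          (ContinuousOn.rpow_const continuousOn_id (fun τ hτ => Or.inl (hsub hτ).ne'))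
      · rw [interior_Icc]
        exact fun τ hτ => (hder τ hτ).differentiableAt.differentiableWithinAt
      · rw [interior_Icc]
        intro τ hτ
        rw [(hder τ hτ).deriv]
        have hτ0 : 0 < τ := hsub' hτ
        have hie := (hE.2.2 τ hτ0).2
        have hX : 0 < τ ^ (-c₂ - 1) := Real.rpow_pos_of_pos hτ0 _
        have hsplit : τ ^ (-c₂) = τ * τ ^ (-c₂ - 1) := by
          have hh := Real.rpow_add hτ0 1 (-c₂ - 1)
          rw [Real.rpow_one, show (1 + (-c₂ - 1)) = -c₂ from by ring] at hh
          exact hh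
        rw [hsplit]
        nlinarith [mul_nonneg hX.le (sub_nonneg.mpr hie)]
    exact hanti hmem_t hmem_s hts
  · set φ := fun τ : ℝ => deriv ρ τ * τ ^ (-c₁) with hφ
    have hder : ∀ τ ∈ Ioo t s, HasDerivAt φ
        (deriv (deriv ρ) τ * τ ^ (-c₁) + deriv ρ τ * (-c₁ * τ ^ (-c₁ - 1))) τ := by
      intro τ hτ
      exact (hasDerivAt_deriv2 hE (hsub' hτ)).mul
        (Real.hasDerivAt_rpow_const (Or.inl (hsub' hτ).ne'))
    have hmono : MonotoneOn φ (Icc t s) := by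
      apply monotoneOn_of_deriv_nonneg (convex_Icc t s)
      · exact ((contOn_deriv hE).mono hsub).mul
          (ContinuousOn.rpow_const continuousOn_id (fun τ hτ => Or.inl (hsub hτ).ne'))
      · rw [interior_Icc]
        exact fun τ hτ => (hder τ hτ).differentiableAt.differentiableWithinAt
      · rw [interior_Icc]
        intro τ hτ
        rw [(hder τ hτ).deriv]
        have hτ0 : 0 < τ := hsub' hτ
        have hie := (hE.2.2 τ hτ0).1
        have hX : 0 < τ ^ (-c₁ - 1) := Real.rpow_pos_of_pos hτ0 _
        have hsplit : τ ^ (-c₁) = τ * τ ^ (-c₁ - 1) := by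
          have hh := Real.rpow_add hτ0 1 (-c₁ - 1)
          rw [Real.rpow_one, show (1 + (-c₁ - 1)) = -c₁ from by ring] at hh
          exact hh
        rw [hsplit]
        nlinarith [mul_nonneg hX.le (sub_nonneg.mpr hie)]
    exact hmono hmem_t hmem_s hts

lemma grow_up (hE : IsElliptic ρ c₁ c₂) {t s : ℝ} (ht : 0 < t) (hts : t ≤ s) :
    deriv ρ s ≤ (s / t) ^ c₂ * deriv ρ t := by
  have hs0 : 0 < s := lt_of_lt_of_le ht hts
  have h := (grow_aux hE ht hts).1
  rw [Real.rpow_neg hs0.le, Real.rpow_neg ht.le] at h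
  have As : 0 < s ^ c₂ := Real.rpow_pos_of_pos hs0 c₂
  have At : 0 < t ^ c₂ := Real.rpow_pos_of_pos ht c₂
  have key : deriv ρ s * t ^ c₂ ≤ deriv ρ t * s ^ c₂ := by
    have h2 : deriv ρ s / s ^ c₂ ≤ deriv ρ t / t ^ c₂ := by
      simpa [div_eq_mul_inv] using h
    exact (div_le_div_iff₀ As At).mp h2
  rw [Real.div_rpow hs0.le ht.le]
  rw [div_mul_eq_mul_div, le_div_iff₀ At]
  linarith [key]

lemma grow_low (hE : IsElliptic ρ c₁ c₂) {t s : ℝ} (ht : 0 < t) (hts : t ≤ s) :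
    (s / t) ^ c₁ * deriv ρ t ≤ deriv ρ s := by
  have hs0 : 0 < s := lt_of_lt_of_le ht hts
  have h := (grow_aux hE ht hts).2
  rw [Real.rpow_neg hs0.le, Real.rpow_neg ht.le] at h
  have As : 0 < s ^ c₁ := Real.rpow_pos_of_pos hs0 c₁
  have At : 0 < t ^ c₁ := Real.rpow_pos_of_pos ht c₁
  have key : deriv ρ t * s ^ c₁ ≤ deriv ρ s * t ^ c₁ := by
    have h2 : deriv ρ t / t ^ c₁ ≤ deriv ρ s / s ^ c₁ := by
      simpa [div_eq_mul_inv] using h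
    exact (div_le_div_iff₀ At As).mp h2
  rw [Real.div_rpow hs0.le ht.le]
  rw [div_mul_eq_mul_div, div_le_iff₀ At]
  linarith [key]

lemma deriv_pos (hc₁ : 0 < c₁) (hN : IsNFunction ρ) (hE : IsElliptic ρ c₁ c₂)
    {t : ℝ} (ht : 0 < t) : 0 < deriv ρ t := by
  obtain ⟨c, hc, hcd⟩ := exists_deriv_eq_slope ρ ht
    (hE.1.continuousOn.mono (fun x hx => hx.1))
    (fun x hx => ((hE.1.differentiableOn one_ne_zero).differentiableAt
      (Ici_mem_nhds hx.1)).differentiableWithinAt)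
  have hρt : 0 < ρ t := by
    have := hN.2.1 (self_mem_Ici) (le_of_lt ht : (0:ℝ) ≤ t) ht
    rwa [hN.1] at this
  have hc0 : 0 < deriv ρ c := by
    rw [hcd, hN.1]
    apply div_pos <;> linarith
  have := grow_low hE hc.1 hc.2.le
  have hp : 0 < (t / c) ^ c₁ := Real.rpow_pos_of_pos (div_pos (lt_trans hc.1 hc.2) hc.1) c₁
  nlinarith

lemma deriv_mono (hc₁ : 0 < c₁) (hN : IsNFunction ρ) (hE : IsElliptic ρ c₁ c₂)
    {t s : ℝ} (ht : 0 < t) (hts : t ≤ s) : deriv ρ t ≤ deriv ρ s := by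
  have h := grow_low hE ht hts
  have h1 : (1:ℝ) ≤ (s / t) ^ c₁ := by
    have h2 : ((1:ℝ)) ^ c₁ ≤ (s/t) ^ c₁ :=
      Real.rpow_le_rpow (by norm_num) ((one_le_div ht).mpr hts) hc₁.le
    rwa [Real.one_rpow] at h2
  nlinarith [deriv_pos hc₁ hN hE ht]

lemma ratio4 (hc₁ : 0 < c₁) (hc₂ : 0 < c₂) (hN : IsNFunction ρ) (hE : IsElliptic ρ c₁ c₂)
    {t s : ℝ} (ht : 0 < t) (h1 : t ≤ s) (h2 : s ≤ 4*t) :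
    deriv ρ s ≤ 4 ^ (max c₂ 1) * deriv ρ t := by
  have hg := grow_up hE ht h1
  have h3 : s / t ≤ 4 := by rw [div_le_iff₀ ht]; linarith
  have h4 : (s/t) ^ c₂ ≤ (4:ℝ) ^ c₂ := Real.rpow_le_rpow (div_nonneg (by linarith) ht.le) h3 hc₂.le
  have h5 : (4:ℝ) ^ c₂ ≤ 4 ^ (max c₂ 1) :=
    Real.rpow_le_rpow_of_exponent_le (by norm_num) (le_max_left _ _)
  have hp := deriv_pos hc₁ hN hE ht
  nlinarith [mul_le_mul_of_nonneg_right (h4.trans h5) hp.le]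

lemma SL_up (hc₁ : 0 < c₁) (hc₂ : 0 < c₂) (hN : IsNFunction ρ) (hE : IsElliptic ρ c₁ c₂)
    {b a : ℝ} (hb : 0 < b) (hba : b ≤ a) (h2 : a ≤ 2*b) :
    deriv ρ a - deriv ρ b ≤ (max c₂ 1 * 2 ^ (max c₂ 1)) * ((a - b)/b) * deriv ρ b := by
  have hx1 : 1 ≤ a/b := (one_le_div hb).mpr hba
  have hx2 : a/b ≤ 2 := by rw [div_le_iff₀ hb]; linarith
  have hg := grow_up hE hb hba
  have hexp : (a/b) ^ c₂ ≤ (a/b) ^ (max c₂ 1) :=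
    Real.rpow_le_rpow_of_exponent_le hx1 (le_max_left _ _)
  have hslope := rpow_slope_up (le_max_right c₂ 1) hx1 hx2
  have hb' : 0 < deriv ρ b := deriv_pos hc₁ hN hE hb
  have h3 : a/b - 1 = (a-b)/b := by field_simp
  rw [← h3]
  have t1 := mul_le_mul_of_nonneg_right hexp hb'.le
  have t2 := mul_le_mul_of_nonneg_right hslope hb'.le
  nlinarith [hg, t1, t2]

lemma SL_low (hc₁ : 0 < c₁) (hc₂ : 0 < c₂) (hN : IsNFunction ρ) (hE : IsElliptic ρ c₁ c₂)
    {b a : ℝ} (hb : 0 < b) (hba : b ≤ a) (h2 : a ≤ 2*b) :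
    (min c₁ 1)/2 * ((a - b)/b) * deriv ρ b ≤ deriv ρ a - deriv ρ b := by
  have hx1 : 1 ≤ a/b := (one_le_div hb).mpr hba
  have hx2 : a/b ≤ 2 := by rw [div_le_iff₀ hb]; linarith
  have hg := grow_low hE hb hba
  have hexp : (a/b) ^ (min c₁ 1) ≤ (a/b) ^ c₁ :=
    Real.rpow_le_rpow_of_exponent_le hx1 (min_le_left _ _)
  have hslope := rpow_slope_low (lt_min hc₁ one_pos) (min_le_right c₁ 1) hx1 hx2
  have hb' : 0 < deriv ρ b := deriv_pos hc₁ hN hE hb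
  have h3 : a/b - 1 = (a-b)/b := by field_simp
  rw [← h3]
  have t1 := mul_le_mul_of_nonneg_right hexp hb'.le
  have t2 := mul_le_mul_of_nonneg_right hslope hb'.le
  nlinarith [hg, t1, t2]

lemma le_of_sq_le_sq' {x y : ℝ} (hx : 0 ≤ x) (hy : 0 ≤ y) (h : x^2 ≤ y^2) : x ≤ y := by
  have := Real.sqrt_le_sqrt h
  rwa [Real.sqrt_sq hx, Real.sqrt_sq hy] at this

lemma A_zero (n : ℕ) : AtensR n ρ 0 = 0 := by simp [AtensR]

lemma norm_A {n : ℕ} {P : EuclideanSpace ℝ (Fin n × Fin n)} (h : 0 < ‖P‖)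
    (hpos : 0 ≤ deriv ρ ‖P‖) : ‖AtensR n ρ P‖ = deriv ρ ‖P‖ := by
  unfold AtensR
  rw [norm_smul, Real.norm_eq_abs, abs_of_nonneg (div_nonneg hpos h.le),
    div_mul_cancel₀ _ h.ne']

lemma Msq {n : ℕ} {P Q : EuclideanSpace ℝ (Fin n × Fin n)} (hP : ‖P‖ ≠ 0) (hQ : ‖Q‖ ≠ 0) :
    ‖AtensR n ρ P - AtensR n ρ Q‖^2 =
      (deriv ρ ‖P‖ - deriv ρ ‖Q‖)^2 +
      2 * (deriv ρ ‖P‖ / ‖P‖) * (deriv ρ ‖Q‖ / ‖Q‖) * (‖P‖*‖Q‖ - (inner ℝ P Q : ℝ)) := by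
  unfold AtensR
  rw [norm_sub_sq_real, real_inner_smul_left, real_inner_smul_right,
    norm_smul, norm_smul, Real.norm_eq_abs, Real.norm_eq_abs, mul_pow, mul_pow,
    sq_abs, sq_abs]
  field_simp
  ring

set_option maxHeartbeats 2000000 in
lemma ordered_upper (hc₁ : 0 < c₁) (hc₂ : 0 < c₂) (hN : IsNFunction ρ)
    (hE : IsElliptic ρ c₁ c₂) (n : ℕ) (P Q : EuclideanSpace ℝ (Fin n × Fin n))
    (hba : ‖Q‖ ≤ ‖P‖) :
    ‖AtensR n ρ P - AtensR n ρ Q‖ ≤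
      (4*(max c₂ 1 * 2^(max c₂ 1)) + 4 + 6*4^(max c₂ 1)) *
        (deriv ρ (‖P‖ + ‖P - Q‖) * ‖P - Q‖ / (‖P‖ + ‖P - Q‖)) := by
  set S := max c₂ 1 * 2^(max c₂ 1) with hSdef
  set K := (4:ℝ)^(max c₂ 1) with hKdef
  have hS0 : 0 < S := by positivity
  have hK0 : 0 < K := by positivity
  by_cases hPQ : P = Q
  · subst hPQ
    simp [sub_self, norm_zero]
  set a := ‖P‖ with ha_def
  set b := ‖Q‖ with hb_def
  set d := ‖P - Q‖ with hd_def
  have hd : 0 < d := norm_pos_iff.mpr (sub_ne_zero.mpr hPQ)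
  have ha : 0 < a := by
    rcases lt_or_ge 0 a with h | h
    · exact h
    · exfalso
      have ha0 : a = 0 := le_antisymm h (norm_nonneg P)
      have hb0 : b = 0 := le_antisymm (ha0 ▸ hba) (norm_nonneg Q)
      have : P = Q := by
        rw [norm_eq_zero.mp ha0, norm_eq_zero.mp hb0]
      exact hPQ this
  have hm : 0 < a + d := by linarith
  set T := deriv ρ (a + d) * d / (a + d) with hTdef
  have hρa : 0 < deriv ρ a := deriv_pos hc₁ hN hE ha
  have hρm : 0 < deriv ρ (a+d) := deriv_pos hc₁ hN hE hm
  have hρd : 0 < deriv ρ d := deriv_pos hc₁ hN hE hd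
  have hT0 : 0 ≤ T := le_of_lt (div_pos (mul_pos hρm hd) hm)
  have htri : a - b ≤ d := norm_sub_norm_le P Q
  have hAP : ‖AtensR n ρ P‖ = deriv ρ a := norm_A ha hρa.le
  have hPne : ‖P‖ ≠ 0 := by rw [← ha_def]; exact ha.ne'
  have hAQ : ‖AtensR n ρ Q‖ ≤ deriv ρ a := by
    rcases eq_or_lt_of_le (norm_nonneg Q) with h | h
    · have hQ0 : Q = 0 := norm_eq_zero.mp h.symm
      rw [hQ0, A_zero, norm_zero]
      exact hρa.le
    · rw [norm_A h (deriv_pos hc₁ hN hE h).le]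
      exact deriv_mono hc₁ hN hE h hba
  clear_value a b d T
  rcases le_or_gt d (a/2) with hcase | hcase
  · -- Case A : d ≤ a/2
    have hb0 : 0 < b := by linarith
    have hab2 : a ≤ 2*b := by linarith
    have hρb : 0 < deriv ρ b := deriv_pos hc₁ hN hE hb0
    have hρab : deriv ρ b ≤ deriv ρ a := deriv_mono hc₁ hN hE hb0 hba
    have hQne : ‖Q‖ ≠ 0 := by rw [← hb_def]; exact hb0.ne'
    have hMs := Msq (P := P) (Q := Q) (n := n) (ρ := ρ) hPne hQne
    rw [← ha_def, ← hb_def] at hMs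
    set α := deriv ρ a / a with hα
    set β := deriv ρ b / b with hβ
    have hα0 : 0 < α := div_pos hρa ha
    have hβ0 : 0 < β := div_pos hρb hb0
    set u := a*b - (inner ℝ P Q : ℝ) with hu
    have hu0 : 0 ≤ u := by
      rw [hu, ha_def, hb_def]
      exact sub_nonneg.mpr (real_inner_le_norm P Q)
    clear_value α β u
    have hd2 : d^2 = (a-b)^2 + 2*u := by
      have h := norm_sub_sq_real P Q
      rw [← ha_def, ← hb_def, ← hd_def] at h
      have hi : (inner ℝ P Q : ℝ) = a*b - u := by rw [hu]; ring
      rw [hi] at h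
      linear_combination h
    have hu_le : 2*u ≤ d^2 := by nlinarith [sq_nonneg (a-b)]
    have hSL := SL_up hc₁ hc₂ hN hE hb0 hba hab2
    have hβα : β ≤ 2*α := by
      rw [hβ, hα, ← mul_div_assoc, div_le_div_iff₀ hb0 ha]
      linarith [mul_le_mul_of_nonneg_right hρab ha.le,
        mul_nonneg hρa.le (by linarith : (0:ℝ) ≤ 2*b - a)]
    have hterm1 : deriv ρ a - deriv ρ b ≤ 2*S*(α*d) := by
      have h1 : S*((a-b)/b)*deriv ρ b = S*(a-b)*β := by rw [hβ]; ring
      rw [h1] at hSL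
      have hab0 : (0:ℝ) ≤ a - b := by linarith
      have p1 : S*(a-b)*β ≤ S*(a-b)*(2*α) :=
        mul_le_mul_of_nonneg_left hβα (mul_nonneg hS0.le hab0)
      have p2 : S*(a-b)*(2*α) ≤ S*d*(2*α) :=
        mul_le_mul_of_nonneg_right (mul_le_mul_of_nonneg_left htri hS0.le) (by positivity)
      linarith [hSL, p1, p2]
    have hT2 : α*d ≤ 2*T := by
      have e1 : deriv ρ a ≤ deriv ρ (a+d) := deriv_mono hc₁ hN hE ha (by linarith)
      have h1 : deriv ρ a * d/(2*a) ≤ T := by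
        rw [hTdef, div_le_div_iff₀ (by positivity) hm]
        linarith [mul_le_mul_of_nonneg_right
          (mul_le_mul e1 (by linarith : a+d ≤ 2*a) hm.le hρm.le) hd.le]
      have h2 : α*d = 2*(deriv ρ a*d/(2*a)) := by rw [hα]; field_simp
      linarith [h1]
    have hcross : 2*α*β*u ≤ 2*(α*d)^2 := by
      have q3 : u ≤ d^2/2 := by linarith
      have q1 : (2*α)*β*u ≤ (2*α)*(2*α)*u :=
        mul_le_mul_of_nonneg_right (mul_le_mul_of_nonneg_left hβα (by positivity)) hu0
      have q2 : (2*α)*(2*α)*u ≤ (2*α)*(2*α)*(d^2/2) :=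
        mul_le_mul_of_nonneg_left q3 (by positivity)
      linarith [q1, q2]
    have h4T : (α*d)^2 ≤ 4*T^2 := by
      have := pow_le_pow_left₀ (by positivity : (0:ℝ) ≤ α*d) hT2 2
      nlinarith [this]
    have hterm1sq : (deriv ρ a - deriv ρ b)^2 ≤ (2*S*(α*d))^2 :=
      pow_le_pow_left₀ (by linarith) hterm1 2
    have hMle : ‖AtensR n ρ P - AtensR n ρ Q‖^2 ≤ ((4*S+4)*T)^2 := by
      rw [hMs]
      have hh1 : (4*S^2+2)*((α*d)^2) ≤ (4*S^2+2)*(4*T^2) :=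
        mul_le_mul_of_nonneg_left h4T (by positivity)
      linarith [hterm1sq, hcross, hh1,
        mul_nonneg hS0.le (sq_nonneg T), sq_nonneg T]
    have hfin : ‖AtensR n ρ P - AtensR n ρ Q‖ ≤ (4*S+4)*T :=
      le_of_sq_le_sq' (norm_nonneg _) (mul_nonneg (by positivity) hT0) hMle
    have : (4*S+4)*T ≤ (4*S+4+6*K)*T := by
      linarith [mul_nonneg hK0.le hT0]
    linarith
  · -- Case B : a/2 < d
    have hup : ‖AtensR n ρ P - AtensR n ρ Q‖ ≤ 2 * deriv ρ a := by
      have h1 := norm_sub_le (AtensR n ρ P) (AtensR n ρ Q)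
      rw [hAP] at h1
      linarith [hAQ]
    have ha2d : deriv ρ a ≤ K * deriv ρ d := by
      have h1 : deriv ρ a ≤ deriv ρ (2*d) := deriv_mono hc₁ hN hE ha (by linarith)
      have h2 : deriv ρ (2*d) ≤ K * deriv ρ d :=
        ratio4 hc₁ hc₂ hN hE hd (by linarith) (by linarith)
      linarith
    have hTd : deriv ρ d ≤ 3*T := by
      have e1 : deriv ρ d ≤ deriv ρ (a+d) := deriv_mono hc₁ hN hE hd (by linarith)
      have h1 : deriv ρ d * d/(3*d) ≤ T := by
        rw [hTdef, div_le_div_iff₀ (by positivity) hm]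
        linarith [mul_le_mul_of_nonneg_right
          (mul_le_mul e1 (by linarith : a+d ≤ 3*d) hm.le hρm.le) hd.le]
      have h2 : deriv ρ d * d/(3*d) = deriv ρ d/3 := by field_simp
      linarith [h1, h2 ▸ h1]
    calc ‖AtensR n ρ P - AtensR n ρ Q‖ ≤ 2*deriv ρ a := hup
      _ ≤ 2*(K*deriv ρ d) := by linarith
      _ ≤ 2*(K*(3*T)) := by
          linarith [mul_le_mul_of_nonneg_left hTd hK0.le]
      _ ≤ (4*S+4+6*K)*T := by
          linarith [mul_nonneg hS0.le hT0, hT0]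

set_option maxHeartbeats 2000000 in
lemma ordered_lower (hc₁ : 0 < c₁) (hc₂ : 0 < c₂) (hN : IsNFunction ρ)
    (hE : IsElliptic ρ c₁ c₂) (n : ℕ) (P Q : EuclideanSpace ℝ (Fin n × Fin n))
    (hba : ‖Q‖ ≤ ‖P‖) :
    (min ((1 - 1/(3:ℝ)^(min c₁ 1))/(4:ℝ)^(max c₂ 1))
      (min (((9/8:ℝ)^(min c₁ 1) - 1)/((4:ℝ)^(max c₂ 1))^2)
        (min ((min c₁ 1)/(4*((4:ℝ)^(max c₂ 1))^2)) (1/(4*((4:ℝ)^(max c₂ 1))^2))))) *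
      (deriv ρ (‖P‖ + ‖P - Q‖) * ‖P - Q‖ / (‖P‖ + ‖P - Q‖)) ≤
      ‖AtensR n ρ P - AtensR n ρ Q‖ := by
  set c' := min c₁ 1 with hc'def
  set K := (4:ℝ)^(max c₂ 1) with hKdef
  set δ := (3:ℝ)^c' with hδdef
  set ε := (9/8:ℝ)^c' - 1 with hεdef
  have hc'0 : 0 < c' := lt_min hc₁ one_pos
  have hc'c₁ : c' ≤ c₁ := min_le_left _ _
  have hK0 : 0 < K := by rw [hKdef]; positivity
  have hK1 : 1 ≤ K := by
    rw [hKdef]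
    have := Real.rpow_le_rpow_of_exponent_le (by norm_num : (1:ℝ) ≤ 4)
      (le_trans zero_le_one (le_max_right c₂ 1) : (0:ℝ) ≤ max c₂ 1)
    rwa [Real.rpow_zero] at this
  have hδ1 : 1 < δ := by
    rw [hδdef]
    rw [Real.one_lt_rpow_iff_of_pos (by norm_num)]
    exact Or.inl ⟨by norm_num, hc'0⟩
  have hδ0 : 0 < δ := lt_trans one_pos hδ1
  have h1δ : 1/δ < 1 := by rw [div_lt_one hδ0]; exact hδ1
  have hε0 : 0 < ε := by
    rw [hεdef]
    have : (1:ℝ) < (9/8:ℝ)^c' :=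
      (Real.one_lt_rpow_iff_of_pos (by norm_num)).mpr (Or.inl ⟨by norm_num, hc'0⟩)
    linarith
  set CL := min ((1 - 1/δ)/K) (min (ε/K^2) (min (c'/(4*K^2)) (1/(4*K^2)))) with hCLdef
  have hCL0 : 0 < CL := by
    rw [hCLdef]
    apply lt_min (by apply div_pos (by linarith) hK0)
    apply lt_min (by apply div_pos hε0 (by positivity))
    exact lt_min (by apply div_pos hc'0 (by positivity)) (by positivity)
  have hCLa : CL ≤ (1 - 1/δ)/K := min_le_left _ _
  have hCLb : CL ≤ ε/K^2 := le_trans (min_le_right _ _) (min_le_left _ _)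
  have hCLc : CL ≤ c'/(4*K^2) :=
    le_trans (min_le_right _ _) (le_trans (min_le_right _ _) (min_le_left _ _))
  have hCLd : CL ≤ 1/(4*K^2) :=
    le_trans (min_le_right _ _) (le_trans (min_le_right _ _) (min_le_right _ _))
  by_cases hPQ : P = Q
  · subst hPQ
    simp [sub_self, norm_zero]
  set a := ‖P‖ with ha_def
  set b := ‖Q‖ with hb_def
  set d := ‖P - Q‖ with hd_def
  have hd : 0 < d := norm_pos_iff.mpr (sub_ne_zero.mpr hPQ)
  have ha : 0 < a := by
    rcases lt_or_ge 0 a with h | h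
    · exact h
    · exfalso
      have ha0 : a = 0 := le_antisymm h (norm_nonneg P)
      have hb0 : b = 0 := le_antisymm (ha0 ▸ hba) (norm_nonneg Q)
      exact hPQ (by rw [norm_eq_zero.mp ha0, norm_eq_zero.mp hb0])
  have hb_nn : 0 ≤ b := norm_nonneg Q
  have hm : 0 < a + d := by linarith
  set T := deriv ρ (a + d) * d / (a + d) with hTdef
  have hρa : 0 < deriv ρ a := deriv_pos hc₁ hN hE ha
  have hρm : 0 < deriv ρ (a+d) := deriv_pos hc₁ hN hE hm
  have hρd : 0 < deriv ρ d := deriv_pos hc₁ hN hE hd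
  have hT0 : 0 ≤ T := le_of_lt (div_pos (mul_pos hρm hd) hm)
  have htri : a - b ≤ d := norm_sub_norm_le P Q
  have htr2 : d ≤ a + b := norm_sub_le P Q
  have hAP : ‖AtensR n ρ P‖ = deriv ρ a := norm_A ha hρa.le
  have hPne : ‖P‖ ≠ 0 := by rw [← ha_def]; exact ha.ne'
  have hQne : 0 < b → ‖Q‖ ≠ 0 := fun h => by rw [← hb_def]; exact h.ne'
  have hAQb : ∀ h : 0 < b, ‖AtensR n ρ Q‖ = deriv ρ b :=
    fun h => norm_A h (deriv_pos hc₁ hN hE h).le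
  have hAQ0 : b = 0 → ‖AtensR n ρ Q‖ = 0 := by
    intro h
    rw [hb_def] at h
    rw [norm_eq_zero.mp h, A_zero, norm_zero]
  have hT1 : T ≤ deriv ρ (a+d) := by
    rw [hTdef, div_le_iff₀ hm]
    exact mul_le_mul_of_nonneg_left (by linarith) hρm.le
  clear_value c' K δ ε CL a b d T
  have hdiff_low : ∀ h : 0 < b, deriv ρ a - deriv ρ b ≤ ‖AtensR n ρ P - AtensR n ρ Q‖ := by
    intro h
    have h1 := norm_sub_norm_le (AtensR n ρ P) (AtensR n ρ Q)
    rw [hAP, hAQb h] at h1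
    exact h1
  rcases le_or_gt d (a/2) with hcase | hcase
  · -- Case A : d ≤ a/2
    have hb0 : 0 < b := by linarith
    have hρb : 0 < deriv ρ b := deriv_pos hc₁ hN hE hb0
    have hKab : deriv ρ a ≤ K * deriv ρ b := by
      rw [hKdef]
      exact ratio4 hc₁ hc₂ hN hE hb0 hba (by linarith)
    have hKam : deriv ρ (a+d) ≤ K * deriv ρ a := by
      rw [hKdef]
      exact ratio4 hc₁ hc₂ hN hE ha (by linarith) (by linarith)
    have hTKa : T ≤ K*(deriv ρ a*d/a) := by
      have h1 : deriv ρ (a+d)*d/(a+d) ≤ K*deriv ρ a*d/a := by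
        rw [div_le_div_iff₀ hm ha]
        have p1 : deriv ρ (a+d)*(d*a) ≤ (K*deriv ρ a)*(d*a) :=
          mul_le_mul_of_nonneg_right hKam (by positivity)
        have p2 : (0:ℝ) ≤ K*deriv ρ a*(d*d) := by positivity
        linarith only [p1, p2]
      have h2 : K*deriv ρ a*d/a = K*(deriv ρ a*d/a) := by ring
      rw [hTdef]
      linarith [h2 ▸ h1]
    rcases le_or_gt (a-b) (d/2) with he | he
    · -- small e : use M
      have hMs := Msq (P := P) (Q := Q) (n := n) (ρ := ρ) hPne (hQne hb0)
      rw [← ha_def, ← hb_def] at hMs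
      set α := deriv ρ a / a with hα
      set β := deriv ρ b / b with hβ
      have hα0 : 0 < α := div_pos hρa ha
      have hβ0 : 0 < β := div_pos hρb hb0
      set u := a*b - (inner ℝ P Q : ℝ) with hu
      have hu0 : 0 ≤ u := by
        rw [hu, ha_def, hb_def]
        exact sub_nonneg.mpr (real_inner_le_norm P Q)
      clear_value α β u
      have hd2 : d^2 = (a-b)^2 + 2*u := by
        have h := norm_sub_sq_real P Q
        rw [← ha_def, ← hb_def, ← hd_def] at h
        have hi : (inner ℝ P Q : ℝ) = a*b - u := by rw [hu]; ring
        rw [hi] at h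
        linear_combination h
      have hu34 : 3/4*d^2 ≤ 2*u := by
        have h1 : (a-b)^2 ≤ (d/2)^2 := pow_le_pow_left₀ (by linarith) he 2
        linarith only [h1, hd2]
      have hβK : α ≤ K*β := by
        rw [hα, hβ, ← mul_div_assoc, div_le_div_iff₀ ha hb0]
        have p1 : deriv ρ a * b ≤ (K*deriv ρ b)*b := mul_le_mul_of_nonneg_right hKab hb_nn
        have p2 : K*deriv ρ b*b ≤ K*deriv ρ b*a :=
          mul_le_mul_of_nonneg_left hba (by positivity)
        linarith only [p1, p2]
      have hTKα : T ≤ K*(α*d) := by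
        have h2 : K*(deriv ρ a*d/a) = K*(α*d) := by rw [hα]; ring
        linarith [h2 ▸ hTKa]
      -- chain to (CL*T)^2 ≤ 2*α*β*u
      have f1 : T^2 ≤ K^2*(α^2*d^2) := by
        have := pow_le_pow_left₀ hT0 hTKα 2
        linarith only [this]
      have f2 : α^2*(d^2) ≤ α^2*((8/3)*u) :=
        mul_le_mul_of_nonneg_left (by linarith) (sq_nonneg α)
      have f2K : K^2*(α^2*(d^2)) ≤ K^2*(α^2*((8/3)*u)) :=
        mul_le_mul_of_nonneg_left f2 (by positivity)
      have f3 : α*(α*u) ≤ (K*β)*(α*u) :=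
        mul_le_mul_of_nonneg_right hβK (by positivity)
      have f3K : ((8/3)*K^2)*(α*(α*u)) ≤ ((8/3)*K^2)*((K*β)*(α*u)) :=
        mul_le_mul_of_nonneg_left f3 (by positivity)
      have h56 : 0 ≤ (32*K^4 - (8/3)*K^3)*(α*β*u) := by
        apply mul_nonneg
        · have h34 : K^3 ≤ K^4 := pow_le_pow_right₀ hK1 (by norm_num)
          linarith only [h34, pow_pos hK0 3]
        · positivity
      have g4 : T^2 ≤ 32*(K^4*(α*β*u)) := by linarith only [f1, f2K, f3K, h56]
      have g1 : CL^2 ≤ (1/(4*K^2))^2 := pow_le_pow_left₀ hCL0.le hCLd 2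
      have g3 : CL^2*T^2 ≤ (1/(4*K^2))^2*T^2 :=
        mul_le_mul_of_nonneg_right g1 (sq_nonneg T)
      have g5 : (1/(4*K^2))^2*T^2 ≤ (1/(4*K^2))^2*(32*(K^4*(α*β*u))) :=
        mul_le_mul_of_nonneg_left g4 (by positivity)
      have g6 : (1/(4*K^2))^2*(32*(K^4*(α*β*u))) = 2*(α*β*u) := by
        field_simp [ha.ne', hK0.ne', hδ0.ne', hd.ne']
        ring
      have G : (CL*T)^2 ≤ 2*α*β*u := by linarith only [g3, g5, g6]
      have hfin : (CL*T)^2 ≤ ‖AtensR n ρ P - AtensR n ρ Q‖^2 := by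
        rw [hMs]
        linarith only [G, sq_nonneg (deriv ρ a - deriv ρ b)]
      exact le_of_sq_le_sq' (by positivity) (norm_nonneg _) hfin
    · -- big e : use first term
      have hab2 : a ≤ 2*b := by linarith
      have hSL := SL_low hc₁ hc₂ hN hE hb0 hba hab2
      rw [← hc'def] at hSL
      have hdiv : (d/2)/a ≤ (a-b)/b := by
        rw [div_le_div_iff₀ ha hb0]
        have p1 : d/2*b ≤ d/2*a := mul_le_mul_of_nonneg_left hba (by linarith)
        have p2 : d/2*a ≤ (a-b)*a := mul_le_mul_of_nonneg_right (by linarith) ha.le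
        linarith only [p1, p2]
      have hκ : deriv ρ a/K ≤ deriv ρ b := by
        rw [div_le_iff₀ hK0]
        linarith [hKab]
      have u1 : c'/2*((d/2)/a)*deriv ρ b ≤ c'/2*((a-b)/b)*deriv ρ b :=
        mul_le_mul_of_nonneg_right
          (mul_le_mul_of_nonneg_left hdiv (by positivity)) hρb.le
      have u2 : c'/2*((d/2)/a)*(deriv ρ a/K) ≤ c'/2*((d/2)/a)*deriv ρ b :=
        mul_le_mul_of_nonneg_left hκ (by positivity)
      have u3 : c'/2*((d/2)/a)*(deriv ρ a/K) = (c'/(4*K))*(deriv ρ a*d/a) := by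
        field_simp [ha.ne', hK0.ne', hδ0.ne', hd.ne']
        ring
      have t3 : (c'/(4*K))*(T/K) ≤ (c'/(4*K))*(deriv ρ a*d/a) := by
        apply mul_le_mul_of_nonneg_left _ (by positivity)
        rw [div_le_iff₀ hK0]
        linarith [hTKa]
      have t4 : (c'/(4*K))*(T/K) = (c'/(4*K^2))*T := by
        rw [div_mul_div_comm, div_mul_eq_mul_div, show (4*K)*K = 4*K^2 from by ring]
      have x1 : CL*T ≤ (c'/(4*K^2))*T := mul_le_mul_of_nonneg_right hCLc hT0
      have hlow := hdiff_low hb0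
      linarith only [hSL, u1, u3 ▸ u2, t3, t4 ▸ t3, x1, hlow]
  · -- Case B : a/2 < d
    have hd4 : 0 < d/4 := by linarith
    have hTKd : T ≤ K*deriv ρ d := by
      have h1 : deriv ρ (a+d) ≤ K*deriv ρ d := by
        rw [hKdef]
        exact ratio4 hc₁ hc₂ hN hE hd (by linarith) (by linarith)
      linarith [hT1]
    rcases le_or_gt b (d/4) with hb4 | hb4
    · -- b small
      have ha34 : 3*(d/4) ≤ a := by linarith
      have hAQ4 : ‖AtensR n ρ Q‖ ≤ deriv ρ (d/4) := by
        rcases eq_or_lt_of_le hb_nn with h | h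
        · rw [hAQ0 h.symm]
          exact (deriv_pos hc₁ hN hE hd4).le
        · rw [hAQb h]
          exact deriv_mono hc₁ hN hE h hb4
      have hgrow : δ * deriv ρ (d/4) ≤ deriv ρ (3*(d/4)) := by
        have h1 := grow_low hE hd4 (by linarith : d/4 ≤ 3*(d/4))
        have hr : (3*(d/4))/(d/4) = 3 := by
          field_simp [ha.ne', hK0.ne', hδ0.ne', hd.ne']
        rw [hr] at h1
        have h2 : δ ≤ (3:ℝ)^c₁ := by
          rw [hδdef]
          exact Real.rpow_le_rpow_of_exponent_le (by norm_num) hc'c₁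
        have h3 : δ*deriv ρ (d/4) ≤ (3:ℝ)^c₁*deriv ρ (d/4) :=
          mul_le_mul_of_nonneg_right h2 (deriv_pos hc₁ hN hE hd4).le
        linarith
      have hmono34 : deriv ρ (3*(d/4)) ≤ deriv ρ a :=
        deriv_mono hc₁ hN hE (by linarith) ha34
      have hd4a : deriv ρ (d/4) ≤ deriv ρ a/δ := by
        rw [le_div_iff₀ hδ0]
        linarith only [hgrow, hmono34]
      have hlow : (1 - 1/δ)*deriv ρ a ≤ ‖AtensR n ρ P - AtensR n ρ Q‖ := by
        have h1 := norm_sub_norm_le (AtensR n ρ P) (AtensR n ρ Q)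
        rw [hAP] at h1
        have h2 : (1 - 1/δ)*deriv ρ a = deriv ρ a - deriv ρ a/δ := by
          field_simp [ha.ne', hK0.ne', hδ0.ne', hd.ne']
        rw [h2]
        linarith only [hAQ4, hd4a, h1]
      have hTa : T ≤ K*deriv ρ a := by
        have h1 : deriv ρ (a+d) ≤ K*deriv ρ a := by
          rw [hKdef]
          exact ratio4 hc₁ hc₂ hN hE ha (by linarith) (by linarith)
        linarith [hT1]
      have v1 : CL*T ≤ ((1 - 1/δ)/K)*T := mul_le_mul_of_nonneg_right hCLa hT0
      have v2 : ((1 - 1/δ)/K)*T ≤ ((1 - 1/δ)/K)*(K*deriv ρ a) :=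
        mul_le_mul_of_nonneg_left hTa (div_nonneg (by linarith) hK0.le)
      have v3 : ((1 - 1/δ)/K)*(K*deriv ρ a) = (1 - 1/δ)*deriv ρ a := by
        field_simp [ha.ne', hK0.ne', hδ0.ne', hd.ne']
      linarith only [v1, hlow, v3 ▸ v2]
    · -- b > d/4
      have hb0 : 0 < b := lt_trans hd4 hb4
      have hρb : 0 < deriv ρ b := deriv_pos hc₁ hN hE hb0
      have ha2d : a < 2*d := by linarith
      have hρd4 : 0 < deriv ρ (d/4) := deriv_pos hc₁ hN hE hd4
      have hGa : deriv ρ d ≤ K*deriv ρ a := by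
        have h1 : deriv ρ d ≤ K*deriv ρ (d/4) := by
          rw [hKdef]
          exact ratio4 hc₁ hc₂ hN hE hd4 (by linarith) (by linarith)
        have h2 : deriv ρ (d/4) ≤ deriv ρ a := deriv_mono hc₁ hN hE hd4 (by linarith)
        linarith only [h1, mul_le_mul_of_nonneg_left h2 hK0.le]
      have hGb : deriv ρ d ≤ K*deriv ρ b := by
        have h1 : deriv ρ d ≤ K*deriv ρ (d/4) := by
          rw [hKdef]
          exact ratio4 hc₁ hc₂ hN hE hd4 (by linarith) (by linarith)
        have h2 : deriv ρ (d/4) ≤ deriv ρ b := deriv_mono hc₁ hN hE hd4 (by linarith)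
        linarith only [h1, mul_le_mul_of_nonneg_left h2 hK0.le]
      rcases le_or_gt (a-b) (d/2) with he | he
      · -- small e : use M
        have hMs := Msq (P := P) (Q := Q) (n := n) (ρ := ρ) hPne (hQne hb0)
        rw [← ha_def, ← hb_def] at hMs
        set α := deriv ρ a / a with hα
        set β := deriv ρ b / b with hβ
        have hα0 : 0 < α := div_pos hρa ha
        have hβ0 : 0 < β := div_pos hρb hb0
        set u := a*b - (inner ℝ P Q : ℝ) with hu
        have hu0 : 0 ≤ u := by
          rw [hu, ha_def, hb_def]
          exact sub_nonneg.mpr (real_inner_le_norm P Q)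
        clear_value α β u
        have hd2 : d^2 = (a-b)^2 + 2*u := by
          have h := norm_sub_sq_real P Q
          rw [← ha_def, ← hb_def, ← hd_def] at h
          have hi : (inner ℝ P Q : ℝ) = a*b - u := by rw [hu]; ring
          rw [hi] at h
          linear_combination h
        have hu34 : 3/4*d^2 ≤ 2*u := by
          have h1 : (a-b)^2 ≤ (d/2)^2 := by
            apply pow_le_pow_left₀ (by linarith) he 2
          linarith only [h1, hd2]
        set G := deriv ρ d with hG
        have hG0 : 0 < G := hρd
        set X := G/(2*K*d) with hX
        have hX0 : 0 < X := by rw [hX]; positivity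
        have w3 : X ≤ α := by
          rw [hX, hα, div_le_div_iff₀ (by positivity) ha]
          have p1 : G*a ≤ (K*deriv ρ a)*a := mul_le_mul_of_nonneg_right hGa ha.le
          have p2 : (K*deriv ρ a)*a ≤ (K*deriv ρ a)*(2*d) :=
            mul_le_mul_of_nonneg_left (by linarith) (by positivity)
          linarith only [p1, p2]
        have w4 : X ≤ β := by
          rw [hX, hβ, div_le_div_iff₀ (by positivity) hb0]
          have p1 : G*b ≤ (K*deriv ρ b)*b := mul_le_mul_of_nonneg_right hGb hb_nn
          have p2 : (K*deriv ρ b)*b ≤ (K*deriv ρ b)*(2*d) :=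
            mul_le_mul_of_nonneg_left (by linarith) (by positivity)
          linarith only [p1, p2]
        clear_value X G
        have z1 : X*X ≤ α*β := mul_le_mul w3 w4 hX0.le hα0.le
        have z2 : (X*X)*((3/8)*d^2) ≤ (α*β)*u :=
          mul_le_mul z1 (by linarith) (by positivity) (by positivity)
        have w6 : (X*X)*((3/8)*d^2) = (3/32)*(G/K)^2 := by
          rw [hX]
          field_simp [ha.ne', hK0.ne', hδ0.ne', hd.ne']
          ring
        have w7 : T^2 ≤ K^2*G^2 := by
          have := pow_le_pow_left₀ hT0 hTKd 2
          linarith only [this]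
        have g1 : CL^2 ≤ (1/(4*K^2))^2 := pow_le_pow_left₀ hCL0.le hCLd 2
        have y1 : CL^2*T^2 ≤ (1/(4*K^2))^2*T^2 :=
          mul_le_mul_of_nonneg_right g1 (sq_nonneg T)
        have y2 : (1/(4*K^2))^2*T^2 ≤ (1/(4*K^2))^2*(K^2*G^2) :=
          mul_le_mul_of_nonneg_left w7 (by positivity)
        have y3 : (1/(4*K^2))^2*(K^2*G^2) = (1/16)*(G/K)^2 := by
          field_simp [ha.ne', hK0.ne', hδ0.ne', hd.ne']
          ring
        have hfin : (CL*T)^2 ≤ ‖AtensR n ρ P - AtensR n ρ Q‖^2 := by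
          rw [hMs]
          linarith only [y1, y2, y3, z2, w6, sq_nonneg (deriv ρ a - deriv ρ b),
            sq_nonneg (G/K)]
        exact le_of_sq_le_sq' (by positivity) (norm_nonneg _) hfin
      · -- big e
        have h98 : (9/8:ℝ) ≤ a/b := by
          rw [le_div_iff₀ hb0]
          have hb2d : b < 2*d := by linarith
          linarith
        have hg := grow_low hE hb0 hba
        have h1 : (9/8:ℝ)^c₁ ≤ (a/b)^c₁ :=
          Real.rpow_le_rpow (by norm_num) h98 hc₁.le
        have h2 : (9/8:ℝ)^c' ≤ (9/8:ℝ)^c₁ :=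
          Real.rpow_le_rpow_of_exponent_le (by norm_num) hc'c₁
        have h3 : (1+ε)*deriv ρ b ≤ deriv ρ a := by
          have p1 : (9/8:ℝ)^c'*deriv ρ b ≤ (a/b)^c₁*deriv ρ b :=
            mul_le_mul_of_nonneg_right (le_trans h2 h1) hρb.le
          have p2 : (1+ε) = (9/8:ℝ)^c' := by rw [hεdef]; ring
          rw [p2]
          linarith only [p1, hg]
        have x1 : CL*T ≤ (ε/K^2)*T := mul_le_mul_of_nonneg_right hCLb hT0
        have x2 : (ε/K^2)*T ≤ (ε/K^2)*(K*deriv ρ d) :=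
          mul_le_mul_of_nonneg_left hTKd (by positivity)
        have x3 : (ε/K^2)*(K*deriv ρ d) = (ε/K)*deriv ρ d := by
          field_simp [ha.ne', hK0.ne', hδ0.ne', hd.ne']
        have x4 : (ε/K)*deriv ρ d ≤ (ε/K)*(K*deriv ρ b) :=
          mul_le_mul_of_nonneg_left hGb (by positivity)
        have x5 : (ε/K)*(K*deriv ρ b) = ε*deriv ρ b := by
          field_simp [ha.ne', hK0.ne', hδ0.ne', hd.ne']
        have x6 := hdiff_low hb0
        have x7 : ε*deriv ρ b ≤ deriv ρ a - deriv ρ b := by linarith only [h3]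
        linarith only [x1, x3 ▸ x2, x5 ▸ x4, x6, x7]

lemma T_nonneg (hc₁ : 0 < c₁) (hN : IsNFunction ρ) (hE : IsElliptic ρ c₁ c₂)
    {x d : ℝ} (hx : 0 ≤ x) (hd : 0 ≤ d) : 0 ≤ deriv ρ (x + d) * d / (x + d) := by
  rcases eq_or_lt_of_le hd with h | h
  · rw [← h]
    simp
  · have hm : 0 < x + d := by linarith
    exact (div_pos (mul_pos (deriv_pos hc₁ hN hE hm) h) hm).le

lemma T_swap (hc₁ : 0 < c₁) (hc₂ : 0 < c₂) (hN : IsNFunction ρ) (hE : IsElliptic ρ c₁ c₂)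
    {b a d : ℝ} (hb : 0 ≤ b) (hba : b ≤ a) (habd : a ≤ b + d) (hd : 0 ≤ d) :
    deriv ρ (b + d) * d / (b + d) ≤ 2 * (deriv ρ (a + d) * d / (a + d)) ∧
    deriv ρ (a + d) * d / (a + d) ≤ (4:ℝ)^(max c₂ 1) * (deriv ρ (b + d) * d / (b + d)) := by
  rcases eq_or_lt_of_le hd with h | hd0
  · rw [← h]
    constructor <;> simp
  · have hbd : 0 < b + d := by linarith
    have had : 0 < a + d := by linarith
    have hmono : deriv ρ (b+d) ≤ deriv ρ (a+d) := deriv_mono hc₁ hN hE hbd (by linarith)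
    have hρbd := deriv_pos hc₁ hN hE hbd
    have hρad := deriv_pos hc₁ hN hE had
    constructor
    · rw [← mul_div_assoc, div_le_div_iff₀ hbd had]
      have p1 : deriv ρ (b+d)*(d*(a+d)) ≤ deriv ρ (a+d)*(d*(a+d)) :=
        mul_le_mul_of_nonneg_right hmono (by positivity)
      have p2 : deriv ρ (a+d)*(d*(a+d)) ≤ deriv ρ (a+d)*(d*(2*(b+d))) :=
        mul_le_mul_of_nonneg_left
          (mul_le_mul_of_nonneg_left (by linarith : a+d ≤ 2*(b+d)) hd) hρad.le
      linarith only [p1, p2]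
    · have hK := ratio4 hc₁ hc₂ hN hE hbd (by linarith) (by linarith : a+d ≤ 4*(b+d))
      rw [← mul_div_assoc, div_le_div_iff₀ had hbd]
      have p1 : deriv ρ (a+d)*(d*(b+d)) ≤ ((4:ℝ)^(max c₂ 1)*deriv ρ (b+d))*(d*(b+d)) :=
        mul_le_mul_of_nonneg_right hK (by positivity)
      have p2 : ((4:ℝ)^(max c₂ 1)*deriv ρ (b+d))*(d*(b+d)) ≤
          ((4:ℝ)^(max c₂ 1)*deriv ρ (b+d))*(d*(a+d)) := by
        apply mul_le_mul_of_nonneg_left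
          (mul_le_mul_of_nonneg_left (by linarith : b+d ≤ a+d) hd)
        positivity
      linarith only [p1, p2]

end St13

open St13 in
set_option maxHeartbeats 1000000 in
/-- For an elliptic N-function `ρ`, uniformly in
`P, Q ∈ ℝ^{n×n}`: `|A^ρ(P) − A^ρ(Q)| ∼ (ρ_{|P|})'(|P − Q|)`, where
`(ρ_a)'(t) = ρ'(a + t)·t/(a + t)`, with constants depending only on the
characteristics of `ρ`. -/
theorem statement13 (n : ℕ) (ρ : ℝ → ℝ) (c₁ c₂ : ℝ) (hc₁ : 0 < c₁) (hc₂ : 0 < c₂)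
    (hN : IsNFunction ρ) (hE : IsElliptic ρ c₁ c₂) :
    ∃ C₁ > 0, ∃ C₂ > 0, ∀ P Q : EuclideanSpace ℝ (Fin n × Fin n),
      C₁ * (deriv ρ (‖P‖ + ‖P - Q‖) * ‖P - Q‖ / (‖P‖ + ‖P - Q‖)) ≤
        ‖AtensR n ρ P - AtensR n ρ Q‖ ∧
      ‖AtensR n ρ P - AtensR n ρ Q‖ ≤
        C₂ * (deriv ρ (‖P‖ + ‖P - Q‖) * ‖P - Q‖ / (‖P‖ + ‖P - Q‖)) := by
  have hmax1 : (1:ℝ) ≤ max c₂ 1 := le_max_right _ _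
  have hmax0 : (0:ℝ) < max c₂ 1 := lt_of_lt_of_le one_pos hmax1
  have hK0 : (0:ℝ) < (4:ℝ)^(max c₂ 1) := Real.rpow_pos_of_pos (by norm_num) _
  have hK1 : (1:ℝ) ≤ (4:ℝ)^(max c₂ 1) := by
    have h := Real.rpow_le_rpow_of_exponent_le (by norm_num : (1:ℝ) ≤ 4)
      (le_trans zero_le_one hmax1 : (0:ℝ) ≤ max c₂ 1)
    rwa [Real.rpow_zero] at h
  have hc'0 : 0 < min c₁ 1 := lt_min hc₁ one_pos
  have hδ1 : 1 < (3:ℝ)^(min c₁ 1) :=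
    (Real.one_lt_rpow_iff_of_pos (by norm_num)).mpr (Or.inl ⟨by norm_num, hc'0⟩)
  have hδ0 : 0 < (3:ℝ)^(min c₁ 1) := lt_trans one_pos hδ1
  have hε0 : 0 < (9/8:ℝ)^(min c₁ 1) - 1 := by
    have h : (1:ℝ) < (9/8:ℝ)^(min c₁ 1) :=
      (Real.one_lt_rpow_iff_of_pos (by norm_num)).mpr (Or.inl ⟨by norm_num, hc'0⟩)
    linarith
  have hCL0 : 0 < min ((1 - 1/(3:ℝ)^(min c₁ 1))/(4:ℝ)^(max c₂ 1))
      (min (((9/8:ℝ)^(min c₁ 1) - 1)/((4:ℝ)^(max c₂ 1))^2)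
        (min ((min c₁ 1)/(4*((4:ℝ)^(max c₂ 1))^2)) (1/(4*((4:ℝ)^(max c₂ 1))^2)))) := by
    have h1δ : 1/(3:ℝ)^(min c₁ 1) < 1 := by
      rw [div_lt_one hδ0]
      exact hδ1
    apply lt_min (div_pos (by linarith) hK0)
    apply lt_min (div_pos hε0 (by positivity))
    exact lt_min (div_pos hc'0 (by positivity)) (by positivity)
  have hCU0 : 0 < 4*(max c₂ 1 * 2^(max c₂ 1)) + 4 + 6*(4:ℝ)^(max c₂ 1) := by
    have h1 : 0 < max c₂ 1 * (2:ℝ)^(max c₂ 1) :=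
      mul_pos hmax0 (Real.rpow_pos_of_pos (by norm_num) _)
    nlinarith [hK0, h1]
  refine ⟨(min ((1 - 1/(3:ℝ)^(min c₁ 1))/(4:ℝ)^(max c₂ 1))
      (min (((9/8:ℝ)^(min c₁ 1) - 1)/((4:ℝ)^(max c₂ 1))^2)
        (min ((min c₁ 1)/(4*((4:ℝ)^(max c₂ 1))^2)) (1/(4*((4:ℝ)^(max c₂ 1))^2)))))/2,
    by linarith,
    (4*(max c₂ 1 * 2^(max c₂ 1)) + 4 + 6*(4:ℝ)^(max c₂ 1)) * (4:ℝ)^(max c₂ 1),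
    mul_pos hCU0 hK0, fun P Q => ?_⟩
  have hT0 : 0 ≤ deriv ρ (‖P‖ + ‖P - Q‖) * ‖P - Q‖ / (‖P‖ + ‖P - Q‖) :=
    T_nonneg hc₁ hN hE (norm_nonneg P) (norm_nonneg _)
  rcases le_total ‖Q‖ ‖P‖ with h | h
  · have hu := ordered_upper hc₁ hc₂ hN hE n P Q h
    have hl := ordered_lower hc₁ hc₂ hN hE n P Q h
    constructor
    · have w := mul_le_mul_of_nonneg_right
        (show (min ((1 - 1/(3:ℝ)^(min c₁ 1))/(4:ℝ)^(max c₂ 1))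
          (min (((9/8:ℝ)^(min c₁ 1) - 1)/((4:ℝ)^(max c₂ 1))^2)
            (min ((min c₁ 1)/(4*((4:ℝ)^(max c₂ 1))^2)) (1/(4*((4:ℝ)^(max c₂ 1))^2)))))/2 ≤
          min ((1 - 1/(3:ℝ)^(min c₁ 1))/(4:ℝ)^(max c₂ 1))
          (min (((9/8:ℝ)^(min c₁ 1) - 1)/((4:ℝ)^(max c₂ 1))^2)
            (min ((min c₁ 1)/(4*((4:ℝ)^(max c₂ 1))^2)) (1/(4*((4:ℝ)^(max c₂ 1))^2)))) from by linarith) hT0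
      linarith only [w, hl]
    · have w : 0 ≤ ((4*(max c₂ 1 * 2^(max c₂ 1)) + 4 + 6*(4:ℝ)^(max c₂ 1)) *
          ((4:ℝ)^(max c₂ 1) - 1)) *
          (deriv ρ (‖P‖ + ‖P - Q‖) * ‖P - Q‖ / (‖P‖ + ‖P - Q‖)) :=
        mul_nonneg (mul_nonneg hCU0.le (by linarith)) hT0
      linarith only [hu, w]
  · have hu := ordered_upper hc₁ hc₂ hN hE n Q P h
    have hl := ordered_lower hc₁ hc₂ hN hE n Q P h
    rw [norm_sub_rev Q P] at hu hl
    rw [norm_sub_rev (AtensR n ρ Q) (AtensR n ρ P)] at hu hl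
    have habd : ‖Q‖ ≤ ‖P‖ + ‖P - Q‖ := by
      have h1 := norm_sub_norm_le Q P
      rw [norm_sub_rev] at h1
      linarith
    obtain ⟨hs1, hs2⟩ := T_swap (b := ‖P‖) (a := ‖Q‖) (d := ‖P - Q‖)
      hc₁ hc₂ hN hE (norm_nonneg P) h habd (norm_nonneg _)
    constructor
    · have w1 := mul_le_mul_of_nonneg_left hs1 (le_of_lt (by linarith :
        (0:ℝ) < (min ((1 - 1/(3:ℝ)^(min c₁ 1))/(4:ℝ)^(max c₂ 1))
          (min (((9/8:ℝ)^(min c₁ 1) - 1)/((4:ℝ)^(max c₂ 1))^2)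
            (min ((min c₁ 1)/(4*((4:ℝ)^(max c₂ 1))^2)) (1/(4*((4:ℝ)^(max c₂ 1))^2)))))/2))
      linarith only [w1, hl]
    · have w2 := mul_le_mul_of_nonneg_left hs2 hCU0.le
      linarith only [hu, w2]
end
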